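/- arXiv:2509.22953 — 2 statements merged into one kernel-verified Lean document; each statement's English description precedes it below -/
import Mathlib

section
/- Neyman-orthogonality of the GDR risk for conditional VAEs (ELBO objective): let μ be a finite measure on a standard Borel space 𝒵; let p*, p : 𝒴 × 𝒵 × 𝒳 → [c, C] be measurable joint model densities (∬ p*(y, z | x) dμ(z) dν(y) = ∬ p(y, z | x) dμ(z) dν(y) = 1 for all x) and q*, q : 𝒵 × 𝒴 × 𝒳 → [c, C] measurable encoder densities (∫ q*(z | y, x) dμ(z) = ∫ q(z | y, x) dμ(z) = 1 for all (y, x)). For s, t near 0 define π_s := π_a + s(π̂ − π_a), ξ_s := ξ + s(ξ̂ − ξ), ξ̃_s(X, A, y) := (𝟙{A = a}/π_s(X))(ξ(y|X) − ξ_s(y|X)) + ξ_s(y|X), p_t := p* + t(p − p*), q_t := q* + t(q − q*), and G(s, t) := E[∫_𝒴 ξ̃_s(X, A, y) (∫_𝒵 q_t(z | y, X) · log(p_t(y, z | X)/q_t(z | y, X)) dμ(z)) dν(y)]. Then there is δ > 0 such that G is well defined for |s|, |t| < δ and the mixed pathwise derivative vanishes: (d/ds)|_{s=0} (d/dt)|_{t=0}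 G(s, t) = 0. -/
open MeasureTheory ProbabilityTheory

private lemma integrable_of_bdd {α : Type*} [MeasurableSpace α] {m : Measure α}
    [IsFiniteMeasure m] {f : α → ℝ} (hf : AEStronglyMeasurable f m) {B : ℝ}
    (hB : ∀ᵐ x ∂m, |f x| ≤ B) : Integrable f m :=
  ⟨hf, HasFiniteIntegral.of_bounded (C := B) (by simpa [Real.norm_eq_abs] using hB)⟩

private lemma hasDerivAt_elbo {a b u v : ℝ} (t : ℝ) (hq : 0 < a + t * b) (hp : 0 < u + t * v) :
    HasDerivAt (fun s => (a + s * b) * Real.log ((u + s * v) / (a + s * b)))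
      (b * (Real.log (u + t * v) - Real.log (a + t * b))
        + (a + t * b) * (v / (u + t * v) - b / (a + t * b))) t := by
  have hq' : HasDerivAt (fun s => a + s * b) b t := by
    simpa using ((hasDerivAt_id t).mul_const b).const_add a
  have hp' : HasDerivAt (fun s => u + s * v) v t := by
    simpa using ((hasDerivAt_id t).mul_const v).const_add u
  have h := hq'.mul ((hp'.log hp.ne').sub (hq'.log hq.ne'))
  have hEv : (fun s => (a + s * b) * Real.log ((u + s * v) / (a + s * b)))
      =ᶠ[nhds t] fun s => (a + s * b) * (Real.log (u + s * v) - Real.log (a + s * b)) := by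
    have h1 : ∀ᶠ s in nhds t, 0 < a + s * b :=
      hq'.continuousAt.eventually (eventually_gt_nhds hq)
    have h2 : ∀ᶠ s in nhds t, 0 < u + s * v :=
      hp'.continuousAt.eventually (eventually_gt_nhds hp)
    filter_upwards [h1, h2] with s hs1 hs2
    rw [Real.log_div hs2.ne' hs1.ne']
  exact h.congr_of_eventuallyEq hEv

private lemma hasDerivAt_xi {k p d f e : ℝ} (s : ℝ) (h : p + s * d ≠ 0) :
    HasDerivAt (fun s => k / (p + s * d) * (f - (f + s * e)) + (f + s * e))
      (e * (1 - k * p / (p + s * d) ^ 2)) s := by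
  have hden : HasDerivAt (fun s => p + s * d) d s := by
    simpa using ((hasDerivAt_id s).mul_const d).const_add p
  have h3 : HasDerivAt (fun s => f + s * e) e s := by
    simpa using ((hasDerivAt_id s).mul_const e).const_add f
  have h1 : HasDerivAt (fun s => k / (p + s * d))
      ((0 * (p + s * d) - k * d) / (p + s * d) ^ 2) s := (hasDerivAt_const s k).div hden h
  have h2 : HasDerivAt (fun s => f - (f + s * e)) (-e) s := h3.const_sub f
  have h4 := (h1.mul h2).add h3
  refine h4.congr_deriv ?_
  field_simp
  ring

private noncomputable def Lc (c C : ℝ) : ℝ := |Real.log (c / 2)| + |Real.log (2 * C)|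

private noncomputable def BQc (c C : ℝ) : ℝ := 2 * C * (Lc c C + Lc c C)

private noncomputable def Bψc (c C : ℝ) : ℝ :=
  C * (Lc c C + Lc c C) + 2 * C * (2 * C / c + 2 * C / c)

private lemma Lc_nonneg (c C : ℝ) : 0 ≤ Lc c C := by unfold Lc; positivity

private lemma BQc_nonneg {c C : ℝ} (hC : 0 < C) : 0 ≤ BQc c C := by
  have := Lc_nonneg c C; unfold BQc; positivity

private lemma Bψc_nonneg {c C : ℝ} (hc : 0 < c) (hC : 0 < C) : 0 ≤ Bψc c C := by
  have := Lc_nonneg c C; unfold Bψc; positivity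

private lemma aff_mem {c C δ g d t : ℝ} (hc : 0 < c) (hcC : c ≤ C) (hδc : δ ≤ c / (2 * C))
    (hg : g ∈ Set.Icc c C) (hgd : g + d ∈ Set.Icc c C) (ht : |t| < δ) :
    c / 2 ≤ g + t * d ∧ g + t * d ≤ 2 * C := by
  have hC : 0 < C := lt_of_lt_of_le hc hcC
  have hδ0 : 0 ≤ δ := le_trans (abs_nonneg t) ht.le
  have hd : |d| ≤ C - c :=
    abs_le.mpr ⟨by linarith [hg.1, hg.2, hgd.1, hgd.2], by linarith [hg.1, hg.2, hgd.1, hgd.2]⟩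
  have htd : |t * d| ≤ δ * (C - c) := by
    rw [abs_mul]; exact mul_le_mul ht.le hd (abs_nonneg d) hδ0
  have hδ2C : δ * (2 * C) ≤ c := (le_div_iff₀ (by positivity)).mp hδc
  have h2 : δ * (C - c) ≤ c / 2 := by nlinarith
  obtain ⟨hl, hr⟩ := abs_le.mp htd
  exact ⟨by linarith [hg.1], by linarith [hg.2]⟩

private lemma log_bd {c C x : ℝ} (hc : 0 < c) (hcC : c ≤ C) (h1 : c / 2 ≤ x) (h2 : x ≤ 2 * C) :
    |Real.log x| ≤ Lc c C := by
  have h0 : (0 : ℝ) < c / 2 := by linarith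
  have l1 : Real.log (c / 2) ≤ Real.log x := Real.log_le_log h0 h1
  have l2 : Real.log x ≤ Real.log (2 * C) := Real.log_le_log (lt_of_lt_of_le h0 h1) h2
  unfold Lc
  rw [abs_le]
  constructor
  · nlinarith [neg_abs_le (Real.log (c / 2)), abs_nonneg (Real.log (2 * C))]
  · nlinarith [le_abs_self (Real.log (2 * C)), abs_nonneg (Real.log (c / 2))]

private lemma elbo_bd {c C δ qs qd ps pd t : ℝ} (hc : 0 < c) (hcC : c ≤ C)
    (hδc : δ ≤ c / (2 * C))
    (hqs : qs ∈ Set.Icc c C) (hq : qs + qd ∈ Set.Icc c C)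
    (hps : ps ∈ Set.Icc c C) (hp : ps + pd ∈ Set.Icc c C) (ht : |t| < δ) :
    |(qs + t * qd) * Real.log ((ps + t * pd) / (qs + t * qd))| ≤ BQc c C := by
  obtain ⟨hq1, hq2⟩ := aff_mem hc hcC hδc hqs hq ht
  obtain ⟨hp1, hp2⟩ := aff_mem hc hcC hδc hps hp ht
  have hqpos : 0 < qs + t * qd := by linarith
  have hppos : 0 < ps + t * pd := by linarith
  have hC : 0 < C := lt_of_lt_of_le hc hcC
  rw [Real.log_div hppos.ne' hqpos.ne', abs_mul]
  have h1 : |qs + t * qd| ≤ 2 * C := by rw [abs_of_pos hqpos]; exact hq2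
  have h2 : |Real.log (ps + t * pd) - Real.log (qs + t * qd)| ≤ Lc c C + Lc c C := by
    calc |Real.log (ps + t * pd) - Real.log (qs + t * qd)|
        ≤ |Real.log (ps + t * pd)| + |Real.log (qs + t * qd)| := abs_sub _ _
      _ ≤ Lc c C + Lc c C := add_le_add (log_bd hc hcC hp1 hp2) (log_bd hc hcC hq1 hq2)
  calc |qs + t * qd| * |Real.log (ps + t * pd) - Real.log (qs + t * qd)|
      ≤ (2 * C) * (Lc c C + Lc c C) :=
        mul_le_mul h1 h2 (abs_nonneg _) (by positivity)
    _ = BQc c C := rfl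

private lemma elbo_deriv_bd {c C δ qs qd ps pd t : ℝ} (hc : 0 < c) (hcC : c ≤ C)
    (hδc : δ ≤ c / (2 * C))
    (hqs : qs ∈ Set.Icc c C) (hq : qs + qd ∈ Set.Icc c C)
    (hps : ps ∈ Set.Icc c C) (hp : ps + pd ∈ Set.Icc c C) (ht : |t| < δ) :
    |qd * (Real.log (ps + t * pd) - Real.log (qs + t * qd))
      + (qs + t * qd) * (pd / (ps + t * pd) - qd / (qs + t * qd))| ≤ Bψc c C := by
  have hC : 0 < C := lt_of_lt_of_le hc hcC
  obtain ⟨hq1, hq2⟩ := aff_mem hc hcC hδc hqs hq ht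
  obtain ⟨hp1, hp2⟩ := aff_mem hc hcC hδc hps hp ht
  have hqpos : 0 < qs + t * qd := by linarith
  have hppos : 0 < ps + t * pd := by linarith
  have hqd : |qd| ≤ C := abs_le.mpr ⟨by linarith [hqs.1, hqs.2, hq.1, hq.2],
    by linarith [hqs.1, hqs.2, hq.1, hq.2]⟩
  have hpd : |pd| ≤ C := abs_le.mpr ⟨by linarith [hps.1, hps.2, hp.1, hp.2],
    by linarith [hps.1, hps.2, hp.1, hp.2]⟩
  have hlog : |Real.log (ps + t * pd) - Real.log (qs + t * qd)| ≤ Lc c C + Lc c C := by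
    calc |Real.log (ps + t * pd) - Real.log (qs + t * qd)|
        ≤ |Real.log (ps + t * pd)| + |Real.log (qs + t * qd)| := abs_sub _ _
      _ ≤ Lc c C + Lc c C := add_le_add (log_bd hc hcC hp1 hp2) (log_bd hc hcC hq1 hq2)
  have hdiv1 : |pd / (ps + t * pd)| ≤ 2 * C / c := by
    rw [abs_div, abs_of_pos hppos, div_le_div_iff₀ hppos (by positivity)]
    nlinarith [abs_nonneg pd]
  have hdiv2 : |qd / (qs + t * qd)| ≤ 2 * C / c := by
    rw [abs_div, abs_of_pos hqpos, div_le_div_iff₀ hqpos (by positivity)]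
    nlinarith [abs_nonneg qd]
  have hsum : |pd / (ps + t * pd) - qd / (qs + t * qd)| ≤ 2 * C / c + 2 * C / c :=
    (abs_sub _ _).trans (add_le_add hdiv1 hdiv2)
  calc |qd * (Real.log (ps + t * pd) - Real.log (qs + t * qd))
      + (qs + t * qd) * (pd / (ps + t * pd) - qd / (qs + t * qd))|
      ≤ |qd * (Real.log (ps + t * pd) - Real.log (qs + t * qd))|
        + |(qs + t * qd) * (pd / (ps + t * pd) - qd / (qs + t * qd))| := abs_add_le _ _
    _ ≤ C * (Lc c C + Lc c C) + 2 * C * (2 * C / c + 2 * C / c) := by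
        rw [abs_mul, abs_mul]
        have hL := Lc_nonneg c C
        have e1 : |qd| * |Real.log (ps + t * pd) - Real.log (qs + t * qd)|
            ≤ C * (Lc c C + Lc c C) :=
          mul_le_mul hqd hlog (abs_nonneg _) hC.le
        have e2 : |qs + t * qd| * |pd / (ps + t * pd) - qd / (qs + t * qd)|
            ≤ 2 * C * (2 * C / c + 2 * C / c) := by
          have h1 : |qs + t * qd| ≤ 2 * C := by rw [abs_of_pos hqpos]; exact hq2
          exact mul_le_mul h1 hsum (abs_nonneg _) (by positivity)
        linarith
    _ = Bψc c C := rfl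

private lemma tstep {α : Type*} [MeasurableSpace α] (M : Measure α) [IsFiniteMeasure M]
    {c C δ BΞ : ℝ} (hc : 0 < c) (hcC : c ≤ C) (hδ : 0 < δ) (hδc : δ ≤ c / (2 * C))
    (Ξ QS QD PS PD : α → ℝ)
    (hΞ : Measurable Ξ) (hQS : Measurable QS) (hQD : Measurable QD)
    (hPS : Measurable PS) (hPD : Measurable PD)
    (hΞbd : ∀ᵐ r ∂M, |Ξ r| ≤ BΞ)
    (hQSm : ∀ r, QS r ∈ Set.Icc c C) (hQm : ∀ r, QS r + QD r ∈ Set.Icc c C)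
    (hPSm : ∀ r, PS r ∈ Set.Icc c C) (hPm : ∀ r, PS r + PD r ∈ Set.Icc c C) :
    (∀ t : ℝ, |t| < δ → Integrable
        (fun r => Ξ r * ((QS r + t * QD r)
          * Real.log ((PS r + t * PD r) / (QS r + t * QD r)))) M)
    ∧ HasDerivAt (fun t => ∫ r, Ξ r *
          ((QS r + t * QD r) * Real.log ((PS r + t * PD r) / (QS r + t * QD r))) ∂M)
        (∫ r, Ξ r * (QD r * (Real.log (PS r) - Real.log (QS r))
          + QS r * (PD r / PS r - QD r / QS r)) ∂M) 0 := by
  have hC : 0 < C := lt_of_lt_of_le hc hcC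
  have hmeas : ∀ t : ℝ, Measurable (fun r => Ξ r * ((QS r + t * QD r)
      * Real.log ((PS r + t * PD r) / (QS r + t * QD r)))) := by
    intro t
    exact hΞ.mul ((hQS.add (hQD.const_mul t)).mul (Real.measurable_log.comp
      ((hPS.add (hPD.const_mul t)).div (hQS.add (hQD.const_mul t)))))
  have hint : ∀ t : ℝ, |t| < δ → Integrable
      (fun r => Ξ r * ((QS r + t * QD r)
        * Real.log ((PS r + t * PD r) / (QS r + t * QD r)))) M := by
    intro t ht
    refine integrable_of_bdd (hmeas t).aestronglyMeasurable (B := BΞ * BQc c C) ?_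
    filter_upwards [hΞbd] with r hr
    rw [abs_mul]
    exact mul_le_mul hr (elbo_bd hc hcC hδc (hQSm r) (hQm r) (hPSm r) (hPm r) ht)
      (abs_nonneg _) ((abs_nonneg _).trans hr)
  refine ⟨hint, ?_⟩
  have hmeas' : Measurable (fun r => Ξ r * (QD r * (Real.log (PS r + 0 * PD r)
      - Real.log (QS r + 0 * QD r)) + (QS r + 0 * QD r) * (PD r / (PS r + 0 * PD r)
      - QD r / (QS r + 0 * QD r)))) := by
    exact hΞ.mul (((hQD.mul ((Real.measurable_log.comp (hPS.add (hPD.const_mul 0))).sub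
      (Real.measurable_log.comp (hQS.add (hQD.const_mul 0))))).add
      ((hQS.add (hQD.const_mul 0)).mul ((hPD.div (hPS.add (hPD.const_mul 0))).sub
      (hQD.div (hQS.add (hQD.const_mul 0)))))))
  have H := hasDerivAt_integral_of_dominated_loc_of_deriv_le (μ := M) (x₀ := (0 : ℝ))
      (F := fun t r => Ξ r * ((QS r + t * QD r)
        * Real.log ((PS r + t * PD r) / (QS r + t * QD r))))
      (F' := fun t r => Ξ r * (QD r * (Real.log (PS r + t * PD r)
        - Real.log (QS r + t * QD r)) + (QS r + t * QD r) * (PD r / (PS r + t * PD r)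
        - QD r / (QS r + t * QD r))))
      (bound := fun _ => BΞ * Bψc c C) (Metric.ball_mem_nhds 0 hδ)
      (Filter.Eventually.of_forall fun t => (hmeas t).aestronglyMeasurable)
      (hint 0 (by simpa using hδ)) hmeas'.aestronglyMeasurable ?_
      (integrable_const _) ?_
  · have e : ∫ r, Ξ r * (QD r * (Real.log (PS r + 0 * PD r) - Real.log (QS r + 0 * QD r))
        + (QS r + 0 * QD r) * (PD r / (PS r + 0 * PD r) - QD r / (QS r + 0 * QD r))) ∂M
        = ∫ r, Ξ r * (QD r * (Real.log (PS r) - Real.log (QS r))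
          + QS r * (PD r / PS r - QD r / QS r)) ∂M := by
      refine integral_congr_ae (Filter.Eventually.of_forall fun r => ?_)
      norm_num
    rw [← e]
    exact H.2
  · filter_upwards [hΞbd] with r hr
    intro t ht
    rw [Metric.mem_ball, Real.dist_eq, sub_zero] at ht
    rw [Real.norm_eq_abs, abs_mul]
    exact mul_le_mul hr (elbo_deriv_bd hc hcC hδc (hQSm r) (hQm r) (hPSm r) (hPm r) ht)
      (abs_nonneg _) ((abs_nonneg _).trans hr)
  · refine Filter.Eventually.of_forall fun r => fun t ht => ?_
    rw [Metric.mem_ball, Real.dist_eq, sub_zero] at ht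
    obtain ⟨hq1, _⟩ := aff_mem hc hcC hδc (hQSm r) (hQm r) ht
    obtain ⟨hp1, _⟩ := aff_mem hc hcC hδc (hPSm r) (hPm r) ht
    exact HasDerivAt.const_mul (Ξ r)
      (hasDerivAt_elbo t (by linarith) (by linarith))

private lemma sstep {α : Type*} [MeasurableSpace α] (M : Measure α) [IsFiniteMeasure M]
    {ε BΨ BΞ BΞd : ℝ} (hε : 0 < ε) (hBΨ : 0 ≤ BΨ) (hBΞ : 0 ≤ BΞ) (hBΞd : 0 ≤ BΞd)
    (K Pi Ph Xi Xih Ψ : α → ℝ)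
    (hK : Measurable K) (hPi : Measurable Pi) (hPh : Measurable Ph)
    (hXi : Measurable Xi) (hXih : Measurable Xih) (hΨ : Measurable Ψ)
    (hKmem : ∀ r, K r = 0 ∨ K r = 1)
    (hov : ∀ᵐ r ∂M, ε ≤ Pi r ∧ Pi r ≤ 1 - ε)
    (hPhm : ∀ r, Ph r ∈ Set.Icc ε 1)
    (hXibd : ∀ r, |Xi r| ≤ BΞ)
    (hXid : ∀ r, |Xih r - Xi r| ≤ BΞd)
    (hΨbd : ∀ r, |Ψ r| ≤ BΨ) :
    HasDerivAt (fun s => ∫ r, (K r / (Pi r + s * (Ph r - Pi r))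
        * (Xi r - (Xi r + s * (Xih r - Xi r))) + (Xi r + s * (Xih r - Xi r))) * Ψ r ∂M)
      (∫ r, ((Xih r - Xi r) * (1 - K r / Pi r)) * Ψ r ∂M) 0 := by
  have hmeas : ∀ s : ℝ, Measurable (fun r => (K r / (Pi r + s * (Ph r - Pi r))
      * (Xi r - (Xi r + s * (Xih r - Xi r))) + (Xi r + s * (Xih r - Xi r))) * Ψ r) := by
    intro s
    exact (((hK.div (hPi.add ((hPh.sub hPi).const_mul s))).mul
      (hXi.sub (hXi.add ((hXih.sub hXi).const_mul s)))).add
      (hXi.add ((hXih.sub hXi).const_mul s))).mul hΨ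
  have hmeas' : Measurable (fun r => ((Xih r - Xi r)
      * (1 - K r * Pi r / (Pi r + 0 * (Ph r - Pi r)) ^ 2)) * Ψ r) := by
    exact ((hXih.sub hXi).mul (measurable_const.sub ((hK.mul hPi).div
      ((hPi.add ((hPh.sub hPi).const_mul 0)).pow_const 2)))).mul hΨ
  have hint0 : Integrable (fun r => (K r / (Pi r + 0 * (Ph r - Pi r))
      * (Xi r - (Xi r + 0 * (Xih r - Xi r))) + (Xi r + 0 * (Xih r - Xi r))) * Ψ r) M := by
    have e : (fun r => (K r / (Pi r + 0 * (Ph r - Pi r))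
        * (Xi r - (Xi r + 0 * (Xih r - Xi r))) + (Xi r + 0 * (Xih r - Xi r))) * Ψ r)
        = fun r => Xi r * Ψ r := funext fun r => by ring
    rw [e]
    refine integrable_of_bdd (hXi.mul hΨ).aestronglyMeasurable (B := BΞ * BΨ)
      (Filter.Eventually.of_forall fun r => ?_)
    rw [abs_mul]
    exact mul_le_mul (hXibd r) (hΨbd r) (abs_nonneg _) hBΞ
  have H := hasDerivAt_integral_of_dominated_loc_of_deriv_le (μ := M) (x₀ := (0 : ℝ))
      (F := fun s r => (K r / (Pi r + s * (Ph r - Pi r))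
        * (Xi r - (Xi r + s * (Xih r - Xi r))) + (Xi r + s * (Xih r - Xi r))) * Ψ r)
      (F' := fun s r => ((Xih r - Xi r)
        * (1 - K r * Pi r / (Pi r + s * (Ph r - Pi r)) ^ 2)) * Ψ r)
      (bound := fun _ => BΞd * (1 + 4 / ε ^ 2) * BΨ) (Metric.ball_mem_nhds 0 (half_pos hε))
      (Filter.Eventually.of_forall fun s => (hmeas s).aestronglyMeasurable)
      hint0 hmeas'.aestronglyMeasurable ?_ (integrable_const _) ?_
  · have e : ∫ r, ((Xih r - Xi r) * (1 - K r * Pi r / (Pi r + 0 * (Ph r - Pi r)) ^ 2)) * Ψ r ∂M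
        = ∫ r, ((Xih r - Xi r) * (1 - K r / Pi r)) * Ψ r ∂M := by
      refine integral_congr_ae (hov.mono fun r hr => ?_)
      have hne : Pi r ≠ 0 := by intro h0; rw [h0] at hr; linarith [hr.1]
      simp only
      have e2 : K r * Pi r / (Pi r + 0 * (Ph r - Pi r)) ^ 2 = K r / Pi r := by
        field_simp
        rw [zero_mul, add_zero, mul_div_assoc, div_self (pow_ne_zero 2 hne), mul_one]
      rw [e2]
    rw [← e]
    exact H.2
  · -- bound on F'
    filter_upwards [hov] with r hr
    intro s hs
    rw [Metric.mem_ball, Real.dist_eq, sub_zero] at hs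
    have hPhr := hPhm r
    have hd : |Ph r - Pi r| ≤ 1 := abs_le.mpr
      ⟨by linarith [hr.1, hr.2, hPhr.1, hPhr.2, hε], by linarith [hr.1, hr.2, hPhr.1, hPhr.2]⟩
    have hden : ε / 2 ≤ Pi r + s * (Ph r - Pi r) := by
      have : |s * (Ph r - Pi r)| ≤ ε / 2 := by
        rw [abs_mul]
        calc |s| * |Ph r - Pi r| ≤ (ε / 2) * 1 :=
          mul_le_mul hs.le hd (abs_nonneg _) (by linarith)
        _ = ε / 2 := by ring
      have := abs_le.mp this
      linarith [hr.1, this.1]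
    have hden2 : (ε / 2) ^ 2 ≤ (Pi r + s * (Ph r - Pi r)) ^ 2 :=
      pow_le_pow_left₀ (by linarith) hden 2
    have hKr : 0 ≤ K r ∧ K r ≤ 1 := by rcases hKmem r with h | h <;> rw [h] <;> norm_num
    have hfrac : 0 ≤ K r * Pi r / (Pi r + s * (Ph r - Pi r)) ^ 2 ∧
        K r * Pi r / (Pi r + s * (Ph r - Pi r)) ^ 2 ≤ 4 / ε ^ 2 := by
      have hPipos : 0 < Pi r := lt_of_lt_of_le hε hr.1
      have hdpos : (0:ℝ) < (Pi r + s * (Ph r - Pi r)) ^ 2 := pow_pos (by linarith) 2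
      have hKPi : K r * Pi r ≤ 1 := by nlinarith [hKr.1, hKr.2, hr.2, hε]
      constructor
      · exact div_nonneg (mul_nonneg hKr.1 hPipos.le) hdpos.le
      · rw [div_le_div_iff₀ hdpos (by positivity)]
        nlinarith [hden2, sq_nonneg ε, mul_nonneg hKr.1 hPipos.le]
    rw [Real.norm_eq_abs, abs_mul, abs_mul]
    have h1 : |1 - K r * Pi r / (Pi r + s * (Ph r - Pi r)) ^ 2| ≤ 1 + 4 / ε ^ 2 :=
      abs_le.mpr ⟨by linarith [hfrac.1, hfrac.2], by linarith [hfrac.1, hfrac.2]⟩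
    exact mul_le_mul (mul_le_mul (hXid r) h1 (abs_nonneg _) hBΞd) (hΨbd r)
      (abs_nonneg _) (mul_nonneg hBΞd (by positivity))
  · -- differentiability on the ball
    filter_upwards [hov] with r hr
    intro s hs
    rw [Metric.mem_ball, Real.dist_eq, sub_zero] at hs
    have hPhr := hPhm r
    have hd : |Ph r - Pi r| ≤ 1 := abs_le.mpr
      ⟨by linarith [hr.1, hr.2, hPhr.1, hPhr.2, hε], by linarith [hr.1, hr.2, hPhr.1, hPhr.2]⟩
    have hden : ε / 2 ≤ Pi r + s * (Ph r - Pi r) := by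
      have : |s * (Ph r - Pi r)| ≤ ε / 2 := by
        rw [abs_mul]
        calc |s| * |Ph r - Pi r| ≤ (ε / 2) * 1 :=
          mul_le_mul hs.le hd (abs_nonneg _) (by linarith)
        _ = ε / 2 := by ring
      have := abs_le.mp this
      linarith [hr.1, this.1]
    exact (hasDerivAt_xi s (by linarith : Pi r + s * (Ph r - Pi r) ≠ 0)).mul_const (Ψ r)

private lemma iter_eq {Ω' 𝒴' 𝒵' : Type*} [MeasurableSpace Ω'] [MeasurableSpace 𝒴']
    [MeasurableSpace 𝒵'] (P' : Measure Ω') [IsFiniteMeasure P'] (ν' : Measure 𝒴')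
    [IsFiniteMeasure ν'] (μ' : Measure 𝒵') [IsFiniteMeasure μ']
    (b : Ω' → 𝒴' → ℝ) (g : Ω' → 𝒴' → 𝒵' → ℝ)
    (hbg : Measurable fun r : Ω' × 𝒴' × 𝒵' => b r.1 r.2.1 * g r.1 r.2.1 r.2.2)
    (hb : ∀ ω, ∃ B, ∀ y, |b ω y| ≤ B) {G : ℝ} (hG : ∀ ω y z, |g ω y z| ≤ G)
    (hint : Integrable (fun r : Ω' × 𝒴' × 𝒵' => b r.1 r.2.1 * g r.1 r.2.1 r.2.2)
      (P'.prod (ν'.prod μ'))) :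
    ∫ ω, ∫ y, b ω y * ∫ z, g ω y z ∂μ' ∂ν' ∂P'
      = ∫ r : Ω' × 𝒴' × 𝒵', b r.1 r.2.1 * g r.1 r.2.1 r.2.2 ∂(P'.prod (ν'.prod μ')) := by
  have hslice : ∀ ω, Integrable (fun w : 𝒴' × 𝒵' => b ω w.1 * g ω w.1 w.2) (ν'.prod μ') := by
    intro ω
    obtain ⟨B, hB⟩ := hb ω
    refine integrable_of_bdd (hbg.comp (measurable_prodMk_left (x := ω))).aestronglyMeasurable
      (B := B * G) (Filter.Eventually.of_forall fun w => ?_)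
    rw [abs_mul]
    exact mul_le_mul (hB w.1) (hG ω w.1 w.2) (abs_nonneg _) ((abs_nonneg _).trans (hB w.1))
  calc ∫ ω, ∫ y, b ω y * ∫ z, g ω y z ∂μ' ∂ν' ∂P'
      = ∫ ω, ∫ w : 𝒴' × 𝒵', b ω w.1 * g ω w.1 w.2 ∂(ν'.prod μ') ∂P' := by
        refine integral_congr_ae (Filter.Eventually.of_forall fun ω => ?_)
        calc ∫ y, b ω y * ∫ z, g ω y z ∂μ' ∂ν'
            = ∫ y, ∫ z, b ω y * g ω y z ∂μ' ∂ν' :=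
              integral_congr_ae (Filter.Eventually.of_forall fun y =>
                (integral_const_mul _ _).symm)
          _ = ∫ w : 𝒴' × 𝒵', b ω w.1 * g ω w.1 w.2 ∂(ν'.prod μ') :=
              integral_integral (hslice ω)
    _ = ∫ r : Ω' × 𝒴' × 𝒵', b r.1 r.2.1 * g r.1 r.2.1 r.2.2 ∂(P'.prod (ν'.prod μ')) :=
        integral_integral hint

private lemma iter_integrable {Ω' 𝒴' 𝒵' : Type*} [MeasurableSpace Ω'] [MeasurableSpace 𝒴']
    [MeasurableSpace 𝒵'] (P' : Measure Ω') [IsFiniteMeasure P'] (ν' : Measure 𝒴')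
    [IsFiniteMeasure ν'] (μ' : Measure 𝒵') [IsFiniteMeasure μ']
    (b : Ω' → 𝒴' → ℝ) (g : Ω' → 𝒴' → 𝒵' → ℝ)
    (hbmeas : Measurable fun w : Ω' × 𝒴' => b w.1 w.2)
    (hgmeas : Measurable fun u : (Ω' × 𝒴') × 𝒵' => g u.1.1 u.1.2 u.2)
    {Bb G : ℝ} (hBb : 0 ≤ Bb) (hG0 : 0 ≤ G)
    (hbbd : ∀ᵐ ω ∂P', ∀ y, |b ω y| ≤ Bb) (hg : ∀ ω y z, |g ω y z| ≤ G) :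
    Integrable (fun ω => ∫ y, b ω y * ∫ z, g ω y z ∂μ' ∂ν') P' := by
  have sInner : StronglyMeasurable fun w : Ω' × 𝒴' => ∫ z, g w.1 w.2 z ∂μ' :=
    hgmeas.stronglyMeasurable.integral_prod_right'
  have sF : StronglyMeasurable fun w : Ω' × 𝒴' => b w.1 w.2 * ∫ z, g w.1 w.2 z ∂μ' :=
    hbmeas.stronglyMeasurable.mul sInner
  have sh : StronglyMeasurable fun ω => ∫ y, b ω y * ∫ z, g ω y z ∂μ' ∂ν' :=
    sF.integral_prod_right'
  refine integrable_of_bdd sh.aestronglyMeasurable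
    (B := Bb * (G * (μ' Set.univ).toReal) * (ν' Set.univ).toReal) ?_
  filter_upwards [hbbd] with ω hω
  have h1 : ∀ y, |b ω y * ∫ z, g ω y z ∂μ'| ≤ Bb * (G * (μ' Set.univ).toReal) := by
    intro y
    rw [abs_mul]
    refine mul_le_mul (hω y) ?_ (abs_nonneg _) hBb
    have h2 := norm_integral_le_of_norm_le_const (μ := μ') (f := fun z => g ω y z) (C := G)
      (Filter.Eventually.of_forall fun z => by rw [Real.norm_eq_abs]; exact hg ω y z)
    simpa [Real.norm_eq_abs, Measure.real] using h2
  have h3 := norm_integral_le_of_norm_le_const (μ := ν')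
    (f := fun y => b ω y * ∫ z, g ω y z ∂μ') (C := Bb * (G * (μ' Set.univ).toReal))
    (Filter.Eventually.of_forall fun y => by rw [Real.norm_eq_abs]; exact h1 y)
  simpa [Real.norm_eq_abs, Measure.real] using h3

/-- Neyman-orthogonality of the GDR risk for conditional VAEs (ELBO objective):
with perturbed nuisances `π_s := π_a + s(π̂ − π_a)`, `ξ_s := ξ + s(ξ̂ − ξ)`, perturbed
pseudo-density `ξ̃_s`, and perturbed targets `p_t := p* + t(p − p*)`, `q_t := q* + t(q − q*)`,
the risk `G(s, t) := E[∫_𝒴 ξ̃_s(X, A, y) (∫_𝒵 q_t(z|y,X) log(p_t(y,z|X)/q_t(z|y,X)) dμ) dν]`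
is well defined for `|s|, |t| < δ` (some δ > 0) and the mixed pathwise derivative vanishes:
`(d/ds)|₀ (d/dt)|₀ G(s, t) = 0`. -/
theorem gdr_neyman_orthogonality_cvae
    {Ω : Type*} [MeasurableSpace Ω]
    (P : Measure Ω) [IsProbabilityMeasure P]
    {𝒳 : Type*} [MeasurableSpace 𝒳] [StandardBorelSpace 𝒳]
    {𝒴 : Type*} [MeasurableSpace 𝒴] [StandardBorelSpace 𝒴]
    (X : Ω → 𝒳) (hX : Measurable X)
    (A : Ω → Bool) (hA : Measurable A)
    (Y : Ω → 𝒴) (hY : Measurable Y)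
    (a : Bool)
    -- propensity score: σ(X)-measurable version of E[𝟙{A = a} | σ(X)]
    (π : 𝒳 → ℝ) (hπmeas : Measurable π)
    (hπver : P[fun ω => (if A ω = a then (1 : ℝ) else 0) |
        MeasurableSpace.comap X inferInstance] =ᵐ[P] fun ω => π (X ω))
    -- strong overlap
    (ε : ℝ) (hε : 0 < ε)
    (hoverlap : ∀ᵐ ω ∂P, ε ≤ π (X ω) ∧ π (X ω) ≤ 1 - ε)
    -- density setup
    (ν : Measure 𝒴) [IsFiniteMeasure ν]
    (c C : ℝ) (hc : 0 < c) (hcC : c ≤ C)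
    (ξ : 𝒴 × 𝒳 → ℝ) (hξmeas : Measurable ξ)
    (hξmem : ∀ q, ξ q ∈ Set.Icc c C)
    (hξnorm : ∀ x, ∫ y, ξ (y, x) ∂ν = 1)
    -- ξ is the conditional outcome density
    (hξdens : ∀ f : 𝒴 × 𝒳 → ℝ, Measurable f → (∃ B : ℝ, ∀ q, |f q| ≤ B) →
      ∫ ω, (if A ω = a then (1 : ℝ) else 0) * f (Y ω, X ω) ∂P
        = ∫ ω, π (X ω) * ∫ y, f (y, X ω) * ξ (y, X ω) ∂ν ∂P)
    -- nuisance estimates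
    (πh : 𝒳 → ℝ) (hπhmeas : Measurable πh) (hπhmem : ∀ x, πh x ∈ Set.Icc ε 1)
    (ξh : 𝒴 × 𝒳 → ℝ) (hξhmeas : Measurable ξh)
    (hξhmem : ∀ q, ξh q ∈ Set.Icc c C)
    (hξhnorm : ∀ x, ∫ y, ξh (y, x) ∂ν = 1)
    -- latent space and its reference measure
    {𝒵 : Type*} [MeasurableSpace 𝒵] [StandardBorelSpace 𝒵]
    (μ : Measure 𝒵) [IsFiniteMeasure μ]
    -- candidate joint model densities
    (pstar p : 𝒴 × 𝒵 × 𝒳 → ℝ)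
    (hpstarmeas : Measurable pstar) (hpstarmem : ∀ v, pstar v ∈ Set.Icc c C)
    (hpstarnorm : ∀ x, ∫ y, ∫ z, pstar (y, z, x) ∂μ ∂ν = 1)
    (hpmeas : Measurable p) (hpmem : ∀ v, p v ∈ Set.Icc c C)
    (hpnorm : ∀ x, ∫ y, ∫ z, p (y, z, x) ∂μ ∂ν = 1)
    -- candidate encoder densities
    (qstar q : 𝒵 × 𝒴 × 𝒳 → ℝ)
    (hqstarmeas : Measurable qstar) (hqstarmem : ∀ v, qstar v ∈ Set.Icc c C)
    (hqstarnorm : ∀ y x, ∫ z, qstar (z, y, x) ∂μ = 1)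
    (hqmeas : Measurable q) (hqmem : ∀ v, q v ∈ Set.Icc c C)
    (hqnorm : ∀ y x, ∫ z, q (z, y, x) ∂μ = 1) :
    -- perturbed pseudo-density ξ̃_s and perturbed targets p_t, q_t
    ∀ (ξt : ℝ → Ω → 𝒴 → ℝ) (pt : ℝ → 𝒴 × 𝒵 × 𝒳 → ℝ) (qt : ℝ → 𝒵 × 𝒴 × 𝒳 → ℝ),
      (∀ s ω y, ξt s ω y =
        ((if A ω = a then (1 : ℝ) else 0) / (π (X ω) + s * (πh (X ω) - π (X ω))))
          * (ξ (y, X ω) - (ξ (y, X ω) + s * (ξh (y, X ω) - ξ (y, X ω))))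
        + (ξ (y, X ω) + s * (ξh (y, X ω) - ξ (y, X ω)))) →
      (∀ t v, pt t v = pstar v + t * (p v - pstar v)) →
      (∀ t v, qt t v = qstar v + t * (q v - qstar v)) →
      ∃ δ > (0 : ℝ),
        -- G is well defined for |s|, |t| < δ
        (∀ s t : ℝ, |s| < δ → |t| < δ →
          Integrable (fun ω => ∫ y, ξt s ω y *
            ∫ z, qt t (z, y, X ω)
              * Real.log (pt t (y, z, X ω) / qt t (z, y, X ω)) ∂μ ∂ν) P)
        ∧
        ∃ D : ℝ → ℝ,
          (∀ s : ℝ, |s| < δ →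
            HasDerivAt (fun t : ℝ => ∫ ω, ∫ y, ξt s ω y *
              ∫ z, qt t (z, y, X ω)
                * Real.log (pt t (y, z, X ω) / qt t (z, y, X ω)) ∂μ ∂ν ∂P) (D s) 0)
          ∧ HasDerivAt D 0 0 := by
  classical
  intro ξt pt qt hξt hpt hqt
  simp only [hξt, hpt, hqt]
  have hC : 0 < C := lt_of_lt_of_le hc hcC
  have hae : (ae P).NeBot := ae_neBot.mpr (IsProbabilityMeasure.ne_zero P)
  obtain ⟨ω₀, hω₀⟩ := hoverlap.exists
  have hε1 : 2 * ε ≤ 1 := by linarith [hω₀.1, hω₀.2]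
  set δ : ℝ := min (ε / 2) (c / (2 * C)) with hδdef
  have hδpos : 0 < δ := lt_min (by linarith) (by positivity)
  have hδε : δ ≤ ε / 2 := min_le_left _ _
  have hδc : δ ≤ c / (2 * C) := min_le_right _ _
  have hδ1 : δ ≤ 1 := by linarith
  -- χ measurable
  have hχm : Measurable (fun ω => if A ω = a then (1 : ℝ) else 0) :=
    Measurable.ite (hA (measurableSet_singleton a)) measurable_const measurable_const
  -- measurable components on Ω × 𝒴 × 𝒵
  have mX1 : Measurable fun r : Ω × 𝒴 × 𝒵 => X r.1 := hX.comp measurable_fst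
  have mY1 : Measurable fun r : Ω × 𝒴 × 𝒵 => r.2.1 := measurable_fst.comp measurable_snd
  have mZ1 : Measurable fun r : Ω × 𝒴 × 𝒵 => r.2.2 := measurable_snd.comp measurable_snd
  have mK : Measurable fun r : Ω × 𝒴 × 𝒵 => if A r.1 = a then (1 : ℝ) else 0 :=
    hχm.comp measurable_fst
  have mPi : Measurable fun r : Ω × 𝒴 × 𝒵 => π (X r.1) := hπmeas.comp mX1
  have mPh : Measurable fun r : Ω × 𝒴 × 𝒵 => πh (X r.1) := hπhmeas.comp mX1
  have mXi : Measurable fun r : Ω × 𝒴 × 𝒵 => ξ (r.2.1, X r.1) := hξmeas.comp (mY1.prodMk mX1)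
  have mXih : Measurable fun r : Ω × 𝒴 × 𝒵 => ξh (r.2.1, X r.1) :=
    hξhmeas.comp (mY1.prodMk mX1)
  have mPS : Measurable fun r : Ω × 𝒴 × 𝒵 => pstar (r.2.1, r.2.2, X r.1) :=
    hpstarmeas.comp (mY1.prodMk (mZ1.prodMk mX1))
  have mP : Measurable fun r : Ω × 𝒴 × 𝒵 => p (r.2.1, r.2.2, X r.1) :=
    hpmeas.comp (mY1.prodMk (mZ1.prodMk mX1))
  have mQS : Measurable fun r : Ω × 𝒴 × 𝒵 => qstar (r.2.2, r.2.1, X r.1) :=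
    hqstarmeas.comp (mZ1.prodMk (mY1.prodMk mX1))
  have mQ : Measurable fun r : Ω × 𝒴 × 𝒵 => q (r.2.2, r.2.1, X r.1) :=
    hqmeas.comp (mZ1.prodMk (mY1.prodMk mX1))
  have mΞ : ∀ s : ℝ, Measurable fun r : Ω × 𝒴 × 𝒵 =>
      (if A r.1 = a then (1 : ℝ) else 0) / (π (X r.1) + s * (πh (X r.1) - π (X r.1)))
        * (ξ (r.2.1, X r.1) - (ξ (r.2.1, X r.1) + s * (ξh (r.2.1, X r.1) - ξ (r.2.1, X r.1))))
      + (ξ (r.2.1, X r.1) + s * (ξh (r.2.1, X r.1) - ξ (r.2.1, X r.1))) := fun s =>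
    ((mK.div (mPi.add ((mPh.sub mPi).const_mul s))).mul
      (mXi.sub (mXi.add ((mXih.sub mXi).const_mul s)))).add
      (mXi.add ((mXih.sub mXi).const_mul s))
  -- overlap lifted to the product measure
  have hovM : ∀ᵐ r ∂(P.prod (ν.prod μ)), ε ≤ π (X r.1) ∧ π (X r.1) ≤ 1 - ε := by
    refine (MeasureTheory.Measure.ae_prod_iff_ae_ae
      (p := fun r : Ω × 𝒴 × 𝒵 => ε ≤ π (X r.1) ∧ π (X r.1) ≤ 1 - ε)
      ((measurableSet_le measurable_const mPi).inter
        (measurableSet_le mPi measurable_const))).mpr ?_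
    exact hoverlap.mono fun ω h => Filter.Eventually.of_forall fun _ => h
  -- scalar bound for the perturbed pseudo-density
  have hξtvalbd : ∀ s k pi ph xi xih : ℝ, |s| < δ → (k = 0 ∨ k = 1) →
      ε ≤ pi → pi ≤ 1 - ε → ε ≤ ph → ph ≤ 1 → xi ∈ Set.Icc c C → xih ∈ Set.Icc c C →
      |k / (pi + s * (ph - pi)) * (xi - (xi + s * (xih - xi))) + (xi + s * (xih - xi))|
        ≤ 2 * C / ε + 2 * C := by
    intro s k pi ph xi xih hs hk h1 h2 h3 h4 hxi hxih
    have hd : |ph - pi| ≤ 1 := abs_le.mpr ⟨by linarith, by linarith⟩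
    have hden : ε / 2 ≤ pi + s * (ph - pi) := by
      have h5 : |s * (ph - pi)| ≤ ε / 2 := by
        rw [abs_mul]
        calc |s| * |ph - pi| ≤ (ε / 2) * 1 :=
              mul_le_mul (by linarith [hs.le, hδε]) hd (abs_nonneg _) (by linarith)
          _ = ε / 2 := by ring
      have h6 := abs_le.mp h5
      linarith [h6.1]
    have hdenpos : 0 < pi + s * (ph - pi) := by linarith
    have hkd : 0 ≤ k / (pi + s * (ph - pi)) ∧ k / (pi + s * (ph - pi)) ≤ 2 / ε := by
      constructor
      · rcases hk with h | h <;> rw [h]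
        · simp
        · positivity
      · rcases hk with h | h <;> rw [h]
        · simp; positivity
        · rw [div_le_div_iff₀ hdenpos hε]; linarith
    have hxid : |xih - xi| ≤ C := abs_le.mpr
      ⟨by linarith [hxi.1, hxi.2, hxih.1, hxih.2], by linarith [hxi.1, hxi.2, hxih.1, hxih.2]⟩
    have hs1 : |s| ≤ 1 := by linarith [hs.le]
    have hterm1 : |xi - (xi + s * (xih - xi))| ≤ C := by
      rw [show xi - (xi + s * (xih - xi)) = -(s * (xih - xi)) by ring, abs_neg, abs_mul]
      calc |s| * |xih - xi| ≤ 1 * C := mul_le_mul hs1 hxid (abs_nonneg _) (by norm_num)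
        _ = C := by ring
    have hterm2 : |xi + s * (xih - xi)| ≤ 2 * C := by
      calc |xi + s * (xih - xi)| ≤ |xi| + |s * (xih - xi)| := abs_add_le _ _
        _ ≤ C + 1 * C := by
            refine add_le_add (abs_le.mpr ⟨by linarith [hxi.1], by linarith [hxi.2]⟩) ?_
            rw [abs_mul]; exact mul_le_mul hs1 hxid (abs_nonneg _) (by norm_num)
        _ = 2 * C := by ring
    calc |k / (pi + s * (ph - pi)) * (xi - (xi + s * (xih - xi))) + (xi + s * (xih - xi))|
        ≤ |k / (pi + s * (ph - pi)) * (xi - (xi + s * (xih - xi)))|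
          + |xi + s * (xih - xi)| := abs_add_le _ _
      _ ≤ (2 / ε) * C + 2 * C := by
          refine add_le_add ?_ hterm2
          rw [abs_mul, abs_of_nonneg hkd.1]
          exact mul_le_mul hkd.2 hterm1 (abs_nonneg _) (by positivity)
      _ = 2 * C / ε + 2 * C := by ring
  have hKor : ∀ ω : Ω, (if A ω = a then (1 : ℝ) else 0) = 0 ∨
      (if A ω = a then (1 : ℝ) else 0) = 1 := fun ω => by
    by_cases h : A ω = a <;> simp [h]
  -- a.e. bound for Ξ over the product measure
  have hΞbdM : ∀ s : ℝ, |s| < δ → ∀ᵐ r ∂(P.prod (ν.prod μ)),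
      |(if A r.1 = a then (1 : ℝ) else 0) / (π (X r.1) + s * (πh (X r.1) - π (X r.1)))
        * (ξ (r.2.1, X r.1) - (ξ (r.2.1, X r.1) + s * (ξh (r.2.1, X r.1) - ξ (r.2.1, X r.1))))
      + (ξ (r.2.1, X r.1) + s * (ξh (r.2.1, X r.1) - ξ (r.2.1, X r.1)))|
        ≤ 2 * C / ε + 2 * C := by
    intro s hs
    filter_upwards [hovM] with r hr
    exact hξtvalbd s _ _ _ _ _ hs (hKor r.1) hr.1 hr.2 (hπhmem (X r.1)).1 (hπhmem (X r.1)).2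
      (hξmem _) (hξhmem _)
  -- the t-step (dominated differentiation over the product measure)
  have hT : ∀ s : ℝ, |s| < δ →
      (∀ t : ℝ, |t| < δ → Integrable (fun r : Ω × 𝒴 × 𝒵 =>
        ((if A r.1 = a then (1 : ℝ) else 0) / (π (X r.1) + s * (πh (X r.1) - π (X r.1)))
          * (ξ (r.2.1, X r.1) - (ξ (r.2.1, X r.1) + s * (ξh (r.2.1, X r.1) - ξ (r.2.1, X r.1))))
         + (ξ (r.2.1, X r.1) + s * (ξh (r.2.1, X r.1) - ξ (r.2.1, X r.1)))) *
        ((qstar (r.2.2, r.2.1, X r.1) + t * (q (r.2.2, r.2.1, X r.1) - qstar (r.2.2, r.2.1, X r.1)))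
          * Real.log ((pstar (r.2.1, r.2.2, X r.1) + t * (p (r.2.1, r.2.2, X r.1) - pstar (r.2.1, r.2.2, X r.1)))
            / (qstar (r.2.2, r.2.1, X r.1) + t * (q (r.2.2, r.2.1, X r.1) - qstar (r.2.2, r.2.1, X r.1))))))
        (P.prod (ν.prod μ)))
      ∧ HasDerivAt (fun t : ℝ => ∫ r : Ω × 𝒴 × 𝒵,
        ((if A r.1 = a then (1 : ℝ) else 0) / (π (X r.1) + s * (πh (X r.1) - π (X r.1)))
          * (ξ (r.2.1, X r.1) - (ξ (r.2.1, X r.1) + s * (ξh (r.2.1, X r.1) - ξ (r.2.1, X r.1))))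
         + (ξ (r.2.1, X r.1) + s * (ξh (r.2.1, X r.1) - ξ (r.2.1, X r.1)))) *
        ((qstar (r.2.2, r.2.1, X r.1) + t * (q (r.2.2, r.2.1, X r.1) - qstar (r.2.2, r.2.1, X r.1)))
          * Real.log ((pstar (r.2.1, r.2.2, X r.1) + t * (p (r.2.1, r.2.2, X r.1) - pstar (r.2.1, r.2.2, X r.1)))
            / (qstar (r.2.2, r.2.1, X r.1) + t * (q (r.2.2, r.2.1, X r.1) - qstar (r.2.2, r.2.1, X r.1)))))
        ∂(P.prod (ν.prod μ)))
        (∫ r : Ω × 𝒴 × 𝒵,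
        ((if A r.1 = a then (1 : ℝ) else 0) / (π (X r.1) + s * (πh (X r.1) - π (X r.1)))
          * (ξ (r.2.1, X r.1) - (ξ (r.2.1, X r.1) + s * (ξh (r.2.1, X r.1) - ξ (r.2.1, X r.1))))
         + (ξ (r.2.1, X r.1) + s * (ξh (r.2.1, X r.1) - ξ (r.2.1, X r.1)))) *
        ((q (r.2.2, r.2.1, X r.1) - qstar (r.2.2, r.2.1, X r.1))
            * (Real.log (pstar (r.2.1, r.2.2, X r.1)) - Real.log (qstar (r.2.2, r.2.1, X r.1)))
          + qstar (r.2.2, r.2.1, X r.1)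
            * ((p (r.2.1, r.2.2, X r.1) - pstar (r.2.1, r.2.2, X r.1)) / pstar (r.2.1, r.2.2, X r.1)
              - (q (r.2.2, r.2.1, X r.1) - qstar (r.2.2, r.2.1, X r.1)) / qstar (r.2.2, r.2.1, X r.1)))
        ∂(P.prod (ν.prod μ))) 0 := by
    intro s hs
    refine tstep (P.prod (ν.prod μ)) hc hcC hδpos hδc _ _ _ _ _ (mΞ s) mQS (mQ.sub mQS) mPS
      (mP.sub mPS) (hΞbdM s hs) (fun r => hqstarmem _) (fun r => ?_) (fun r => hpstarmem _)
      (fun r => ?_)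
    · have e : qstar (r.2.2, r.2.1, X r.1)
          + (q (r.2.2, r.2.1, X r.1) - qstar (r.2.2, r.2.1, X r.1)) = q (r.2.2, r.2.1, X r.1) :=
        by ring
      rw [e]; exact hqmem _
    · have e : pstar (r.2.1, r.2.2, X r.1)
          + (p (r.2.1, r.2.2, X r.1) - pstar (r.2.1, r.2.2, X r.1)) = p (r.2.1, r.2.2, X r.1) :=
        by ring
      rw [e]; exact hpmem _
  -- helper memberships
  have hqm' : ∀ v : 𝒵 × 𝒴 × 𝒳, qstar v + (q v - qstar v) ∈ Set.Icc c C := fun v => by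
    rw [show qstar v + (q v - qstar v) = q v by ring]; exact hqmem v
  have hpm' : ∀ v : 𝒴 × 𝒵 × 𝒳, pstar v + (p v - pstar v) ∈ Set.Icc c C := fun v => by
    rw [show pstar v + (p v - pstar v) = p v by ring]; exact hpmem v
  -- second scalar bound for the pseudo-density (fixed ω, arbitrary weight)
  have hξt_bd2 : ∀ w s xi xih : ℝ, |s| ≤ 1 → xi ∈ Set.Icc c C → xih ∈ Set.Icc c C →
      |w * (xi - (xi + s * (xih - xi))) + (xi + s * (xih - xi))| ≤ |w| * C + 2 * C := by
    intro w s xi xih hs hxi hxih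
    have hxid : |xih - xi| ≤ C := abs_le.mpr
      ⟨by linarith [hxi.1, hxi.2, hxih.1, hxih.2], by linarith [hxi.1, hxi.2, hxih.1, hxih.2]⟩
    have hterm1 : |xi - (xi + s * (xih - xi))| ≤ C := by
      rw [show xi - (xi + s * (xih - xi)) = -(s * (xih - xi)) by ring, abs_neg, abs_mul]
      calc |s| * |xih - xi| ≤ 1 * C := mul_le_mul hs hxid (abs_nonneg _) (by norm_num)
        _ = C := by ring
    have hterm2 : |xi + s * (xih - xi)| ≤ 2 * C := by
      calc |xi + s * (xih - xi)| ≤ |xi| + |s * (xih - xi)| := abs_add_le _ _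
        _ ≤ C + 1 * C := by
            refine add_le_add (abs_le.mpr ⟨by linarith [hxi.1], by linarith [hxi.2]⟩) ?_
            rw [abs_mul]; exact mul_le_mul hs hxid (abs_nonneg _) (by norm_num)
        _ = 2 * C := by ring
    calc |w * (xi - (xi + s * (xih - xi))) + (xi + s * (xih - xi))|
        ≤ |w * (xi - (xi + s * (xih - xi)))| + |xi + s * (xih - xi)| := abs_add_le _ _
      _ ≤ |w| * C + 2 * C := by
          refine add_le_add ?_ hterm2
          rw [abs_mul]
          exact mul_le_mul_of_nonneg_left hterm1 (abs_nonneg w)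
  -- measurability on Ω × 𝒴
  have mX2 : Measurable fun u : Ω × 𝒴 => X u.1 := hX.comp measurable_fst
  have mXi2 : Measurable fun u : Ω × 𝒴 => ξ (u.2, X u.1) :=
    hξmeas.comp (measurable_snd.prodMk mX2)
  have mXih2 : Measurable fun u : Ω × 𝒴 => ξh (u.2, X u.1) :=
    hξhmeas.comp (measurable_snd.prodMk mX2)
  have mΞ2 : ∀ s : ℝ, Measurable fun u : Ω × 𝒴 =>
      (if A u.1 = a then (1 : ℝ) else 0) / (π (X u.1) + s * (πh (X u.1) - π (X u.1)))
        * (ξ (u.2, X u.1) - (ξ (u.2, X u.1) + s * (ξh (u.2, X u.1) - ξ (u.2, X u.1))))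
      + (ξ (u.2, X u.1) + s * (ξh (u.2, X u.1) - ξ (u.2, X u.1))) := fun s =>
    (((hχm.comp measurable_fst).div ((hπmeas.comp mX2).add
        (((hπhmeas.comp mX2).sub (hπmeas.comp mX2)).const_mul s))).mul
      (mXi2.sub (mXi2.add ((mXih2.sub mXi2).const_mul s)))).add
      (mXi2.add ((mXih2.sub mXi2).const_mul s))
  -- measurability on (Ω × 𝒴) × 𝒵
  have mX3 : Measurable fun u : (Ω × 𝒴) × 𝒵 => X u.1.1 :=
    hX.comp (measurable_fst.comp measurable_fst)
  have mY3 : Measurable fun u : (Ω × 𝒴) × 𝒵 => u.1.2 := measurable_snd.comp measurable_fst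
  have mZ3 : Measurable fun u : (Ω × 𝒴) × 𝒵 => u.2 := measurable_snd
  have mQS3 : Measurable fun u : (Ω × 𝒴) × 𝒵 => qstar (u.2, u.1.2, X u.1.1) :=
    hqstarmeas.comp (mZ3.prodMk (mY3.prodMk mX3))
  have mQ3 : Measurable fun u : (Ω × 𝒴) × 𝒵 => q (u.2, u.1.2, X u.1.1) :=
    hqmeas.comp (mZ3.prodMk (mY3.prodMk mX3))
  have mPS3 : Measurable fun u : (Ω × 𝒴) × 𝒵 => pstar (u.1.2, u.2, X u.1.1) :=
    hpstarmeas.comp (mY3.prodMk (mZ3.prodMk mX3))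
  have mP3 : Measurable fun u : (Ω × 𝒴) × 𝒵 => p (u.1.2, u.2, X u.1.1) :=
    hpmeas.comp (mY3.prodMk (mZ3.prodMk mX3))
  have mEl3 : ∀ t : ℝ, Measurable fun u : (Ω × 𝒴) × 𝒵 =>
      (qstar (u.2, u.1.2, X u.1.1) + t * (q (u.2, u.1.2, X u.1.1) - qstar (u.2, u.1.2, X u.1.1)))
        * Real.log ((pstar (u.1.2, u.2, X u.1.1)
          + t * (p (u.1.2, u.2, X u.1.1) - pstar (u.1.2, u.2, X u.1.1)))
        / (qstar (u.2, u.1.2, X u.1.1)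
          + t * (q (u.2, u.1.2, X u.1.1) - qstar (u.2, u.1.2, X u.1.1)))) := fun t =>
    (mQS3.add ((mQ3.sub mQS3).const_mul t)).mul (Real.measurable_log.comp
      ((mPS3.add ((mP3.sub mPS3).const_mul t)).div (mQS3.add ((mQ3.sub mQS3).const_mul t))))
  -- elbo measurable on Ω × 𝒴 × 𝒵
  have mEl : ∀ t : ℝ, Measurable fun r : Ω × 𝒴 × 𝒵 =>
      (qstar (r.2.2, r.2.1, X r.1) + t * (q (r.2.2, r.2.1, X r.1) - qstar (r.2.2, r.2.1, X r.1)))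
        * Real.log ((pstar (r.2.1, r.2.2, X r.1)
          + t * (p (r.2.1, r.2.2, X r.1) - pstar (r.2.1, r.2.2, X r.1)))
        / (qstar (r.2.2, r.2.1, X r.1)
          + t * (q (r.2.2, r.2.1, X r.1) - qstar (r.2.2, r.2.1, X r.1)))) := fun t =>
    (mQS.add ((mQ.sub mQS).const_mul t)).mul (Real.measurable_log.comp
      ((mPS.add ((mP.sub mPS).const_mul t)).div (mQS.add ((mQ.sub mQS).const_mul t))))
  -- Fubini: iterated integral equals product integral
  have hIter : ∀ s t : ℝ, |s| < δ → |t| < δ →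
      (∫ ω, ∫ y,
        ((if A ω = a then (1 : ℝ) else 0) / (π (X ω) + s * (πh (X ω) - π (X ω)))
          * (ξ (y, X ω) - (ξ (y, X ω) + s * (ξh (y, X ω) - ξ (y, X ω))))
         + (ξ (y, X ω) + s * (ξh (y, X ω) - ξ (y, X ω)))) *
        ∫ z, (qstar (z, y, X ω) + t * (q (z, y, X ω) - qstar (z, y, X ω)))
          * Real.log ((pstar (y, z, X ω) + t * (p (y, z, X ω) - pstar (y, z, X ω)))
            / (qstar (z, y, X ω) + t * (q (z, y, X ω) - qstar (z, y, X ω)))) ∂μ ∂ν ∂P)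
      = ∫ r : Ω × 𝒴 × 𝒵,
        ((if A r.1 = a then (1 : ℝ) else 0) / (π (X r.1) + s * (πh (X r.1) - π (X r.1)))
          * (ξ (r.2.1, X r.1) - (ξ (r.2.1, X r.1) + s * (ξh (r.2.1, X r.1) - ξ (r.2.1, X r.1))))
         + (ξ (r.2.1, X r.1) + s * (ξh (r.2.1, X r.1) - ξ (r.2.1, X r.1)))) *
        ((qstar (r.2.2, r.2.1, X r.1)
            + t * (q (r.2.2, r.2.1, X r.1) - qstar (r.2.2, r.2.1, X r.1)))
          * Real.log ((pstar (r.2.1, r.2.2, X r.1)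
              + t * (p (r.2.1, r.2.2, X r.1) - pstar (r.2.1, r.2.2, X r.1)))
            / (qstar (r.2.2, r.2.1, X r.1)
              + t * (q (r.2.2, r.2.1, X r.1) - qstar (r.2.2, r.2.1, X r.1)))))
        ∂(P.prod (ν.prod μ)) := by
    intro s t hs ht
    refine iter_eq P ν μ
      (fun ω y =>
        (if A ω = a then (1 : ℝ) else 0) / (π (X ω) + s * (πh (X ω) - π (X ω)))
          * (ξ (y, X ω) - (ξ (y, X ω) + s * (ξh (y, X ω) - ξ (y, X ω))))
         + (ξ (y, X ω) + s * (ξh (y, X ω) - ξ (y, X ω))))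
      (fun ω y z =>
        (qstar (z, y, X ω) + t * (q (z, y, X ω) - qstar (z, y, X ω)))
          * Real.log ((pstar (y, z, X ω) + t * (p (y, z, X ω) - pstar (y, z, X ω)))
            / (qstar (z, y, X ω) + t * (q (z, y, X ω) - qstar (z, y, X ω)))))
      ((mΞ s).mul (mEl t)) (fun ω => ?_)
      (fun ω y z => elbo_bd hc hcC hδc (hqstarmem _) (hqm' _) (hpstarmem _) (hpm' _) ht)
      ((hT s hs).1 t ht)
    refine ⟨|(if A ω = a then (1 : ℝ) else 0) / (π (X ω) + s * (πh (X ω) - π (X ω)))| * C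
      + 2 * C, fun y => ?_⟩
    exact hξt_bd2 _ s _ _ (by linarith [hs.le]) (hξmem _) (hξhmem _)
  -- the ψ function, its measurability and bound
  have mΨ : Measurable fun r : Ω × 𝒴 × 𝒵 =>
      (q (r.2.2, r.2.1, X r.1) - qstar (r.2.2, r.2.1, X r.1))
        * (Real.log (pstar (r.2.1, r.2.2, X r.1)) - Real.log (qstar (r.2.2, r.2.1, X r.1)))
      + qstar (r.2.2, r.2.1, X r.1)
        * ((p (r.2.1, r.2.2, X r.1) - pstar (r.2.1, r.2.2, X r.1)) / pstar (r.2.1, r.2.2, X r.1)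
          - (q (r.2.2, r.2.1, X r.1) - qstar (r.2.2, r.2.1, X r.1))
            / qstar (r.2.2, r.2.1, X r.1)) :=
    ((mQ.sub mQS).mul ((Real.measurable_log.comp mPS).sub (Real.measurable_log.comp mQS))).add
      (mQS.mul (((mP.sub mPS).div mPS).sub ((mQ.sub mQS).div mQS)))
  have hψsc : ∀ (x : 𝒳) (y : 𝒴) (z : 𝒵),
      |(q (z, y, x) - qstar (z, y, x)) * (Real.log (pstar (y, z, x)) - Real.log (qstar (z, y, x)))
        + qstar (z, y, x) * ((p (y, z, x) - pstar (y, z, x)) / pstar (y, z, x)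
          - (q (z, y, x) - qstar (z, y, x)) / qstar (z, y, x))| ≤ Bψc c C := by
    intro x y z
    have h := elbo_deriv_bd (t := 0) hc hcC hδc (hqstarmem (z, y, x)) (hqm' (z, y, x))
      (hpstarmem (y, z, x)) (hpm' (y, z, x)) (by simpa using hδpos)
    simpa using h
  have hBψ0 : 0 ≤ Bψc c C := Bψc_nonneg hc hC
  refine ⟨δ, hδpos, ?_, fun s : ℝ => ∫ r : Ω × 𝒴 × 𝒵,
      ((if A r.1 = a then (1 : ℝ) else 0) / (π (X r.1) + s * (πh (X r.1) - π (X r.1)))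
        * (ξ (r.2.1, X r.1) - (ξ (r.2.1, X r.1) + s * (ξh (r.2.1, X r.1) - ξ (r.2.1, X r.1))))
       + (ξ (r.2.1, X r.1) + s * (ξh (r.2.1, X r.1) - ξ (r.2.1, X r.1)))) *
      ((q (r.2.2, r.2.1, X r.1) - qstar (r.2.2, r.2.1, X r.1))
          * (Real.log (pstar (r.2.1, r.2.2, X r.1)) - Real.log (qstar (r.2.2, r.2.1, X r.1)))
        + qstar (r.2.2, r.2.1, X r.1)
          * ((p (r.2.1, r.2.2, X r.1) - pstar (r.2.1, r.2.2, X r.1))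
              / pstar (r.2.1, r.2.2, X r.1)
            - (q (r.2.2, r.2.1, X r.1) - qstar (r.2.2, r.2.1, X r.1))
              / qstar (r.2.2, r.2.1, X r.1))) ∂(P.prod (ν.prod μ)), ?_, ?_⟩
  · -- well-definedness of the iterated integral
    intro s t hs ht
    refine iter_integrable P ν μ
      (fun ω y =>
        (if A ω = a then (1 : ℝ) else 0) / (π (X ω) + s * (πh (X ω) - π (X ω)))
          * (ξ (y, X ω) - (ξ (y, X ω) + s * (ξh (y, X ω) - ξ (y, X ω))))
         + (ξ (y, X ω) + s * (ξh (y, X ω) - ξ (y, X ω))))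
      (fun ω y z =>
        (qstar (z, y, X ω) + t * (q (z, y, X ω) - qstar (z, y, X ω)))
          * Real.log ((pstar (y, z, X ω) + t * (p (y, z, X ω) - pstar (y, z, X ω)))
            / (qstar (z, y, X ω) + t * (q (z, y, X ω) - qstar (z, y, X ω)))))
      (mΞ2 s) (mEl3 t) (Bb := 2 * C / ε + 2 * C) (G := BQc c C) (by positivity)
      (BQc_nonneg hC) ?_
      (fun ω y z => elbo_bd hc hcC hδc (hqstarmem _) (hqm' _) (hpstarmem _) (hpm' _) ht)
    filter_upwards [hoverlap] with ω h
    intro y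
    exact hξtvalbd s _ _ _ _ _ hs (hKor ω) h.1 h.2 (hπhmem (X ω)).1 (hπhmem (X ω)).2
      (hξmem _) (hξhmem _)
  · -- derivative in t at 0 for each |s| < δ
    intro s hs
    refine ((hT s hs).2).congr_of_eventuallyEq ?_
    refine Filter.eventuallyEq_of_mem (Metric.ball_mem_nhds (0 : ℝ) hδpos) fun t ht => ?_
    rw [Metric.mem_ball, Real.dist_eq, sub_zero] at ht
    exact hIter s t hs ht
  · -- the derivative of D at 0 vanishes
    -- measurability on 𝒳 × (𝒴 × 𝒵) for g2
    have mX4 : Measurable fun u : 𝒳 × 𝒴 × 𝒵 => u.1 := measurable_fst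
    have mY4 : Measurable fun u : 𝒳 × 𝒴 × 𝒵 => u.2.1 := measurable_fst.comp measurable_snd
    have mZ4 : Measurable fun u : 𝒳 × 𝒴 × 𝒵 => u.2.2 := measurable_snd.comp measurable_snd
    have mQS4 : Measurable fun u : 𝒳 × 𝒴 × 𝒵 => qstar (u.2.2, u.2.1, u.1) :=
      hqstarmeas.comp (mZ4.prodMk (mY4.prodMk mX4))
    have mQ4 : Measurable fun u : 𝒳 × 𝒴 × 𝒵 => q (u.2.2, u.2.1, u.1) :=
      hqmeas.comp (mZ4.prodMk (mY4.prodMk mX4))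
    have mPS4 : Measurable fun u : 𝒳 × 𝒴 × 𝒵 => pstar (u.2.1, u.2.2, u.1) :=
      hpstarmeas.comp (mY4.prodMk (mZ4.prodMk mX4))
    have mP4 : Measurable fun u : 𝒳 × 𝒴 × 𝒵 => p (u.2.1, u.2.2, u.1) :=
      hpmeas.comp (mY4.prodMk (mZ4.prodMk mX4))
    have mXi4 : Measurable fun u : 𝒳 × 𝒴 × 𝒵 => ξ (u.2.1, u.1) :=
      hξmeas.comp (mY4.prodMk mX4)
    have mXih4 : Measurable fun u : 𝒳 × 𝒴 × 𝒵 => ξh (u.2.1, u.1) :=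
      hξhmeas.comp (mY4.prodMk mX4)
    have mg2full : Measurable fun u : 𝒳 × 𝒴 × 𝒵 =>
        (ξh (u.2.1, u.1) - ξ (u.2.1, u.1)) *
        ((q (u.2.2, u.2.1, u.1) - qstar (u.2.2, u.2.1, u.1))
            * (Real.log (pstar (u.2.1, u.2.2, u.1)) - Real.log (qstar (u.2.2, u.2.1, u.1)))
          + qstar (u.2.2, u.2.1, u.1)
            * ((p (u.2.1, u.2.2, u.1) - pstar (u.2.1, u.2.2, u.1)) / pstar (u.2.1, u.2.2, u.1)
              - (q (u.2.2, u.2.1, u.1) - qstar (u.2.2, u.2.1, u.1))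
                / qstar (u.2.2, u.2.1, u.1))) :=
      (mXih4.sub mXi4).mul
        (((mQ4.sub mQS4).mul ((Real.measurable_log.comp mPS4).sub
          (Real.measurable_log.comp mQS4))).add
        (mQS4.mul (((mP4.sub mPS4).div mPS4).sub ((mQ4.sub mQS4).div mQS4))))
    set g2 : 𝒳 → ℝ := fun x => ∫ w : 𝒴 × 𝒵, (ξh (w.1, x) - ξ (w.1, x)) *
        ((q (w.2, w.1, x) - qstar (w.2, w.1, x))
            * (Real.log (pstar (w.1, w.2, x)) - Real.log (qstar (w.2, w.1, x)))
          + qstar (w.2, w.1, x)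
            * ((p (w.1, w.2, x) - pstar (w.1, w.2, x)) / pstar (w.1, w.2, x)
              - (q (w.2, w.1, x) - qstar (w.2, w.1, x)) / qstar (w.2, w.1, x)))
        ∂(ν.prod μ) with hg2def
    have mg2 : Measurable g2 := by
      rw [hg2def]
      exact mg2full.stronglyMeasurable.integral_prod_right'.measurable
    have hξdbd : ∀ (y : 𝒴) (x : 𝒳), |ξh (y, x) - ξ (y, x)| ≤ C := fun y x => abs_le.mpr
      ⟨by linarith [(hξmem (y, x)).1, (hξmem (y, x)).2, (hξhmem (y, x)).1, (hξhmem (y, x)).2],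
       by linarith [(hξmem (y, x)).1, (hξmem (y, x)).2, (hξhmem (y, x)).1, (hξhmem (y, x)).2]⟩
    have hg2bd : ∀ x, |g2 x| ≤ C * Bψc c C * ((ν.prod μ) Set.univ).toReal := by
      intro x
      rw [hg2def]
      have h := norm_integral_le_of_norm_le_const (μ := ν.prod μ) (C := C * Bψc c C)
        (f := fun w : 𝒴 × 𝒵 => (ξh (w.1, x) - ξ (w.1, x)) *
          ((q (w.2, w.1, x) - qstar (w.2, w.1, x))
              * (Real.log (pstar (w.1, w.2, x)) - Real.log (qstar (w.2, w.1, x)))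
            + qstar (w.2, w.1, x)
              * ((p (w.1, w.2, x) - pstar (w.1, w.2, x)) / pstar (w.1, w.2, x)
                - (q (w.2, w.1, x) - qstar (w.2, w.1, x)) / qstar (w.2, w.1, x))))
        (Filter.Eventually.of_forall fun w => ?_)
      · simpa [Real.norm_eq_abs, Measure.real] using h
      · rw [Real.norm_eq_abs, abs_mul]
        exact mul_le_mul (hξdbd w.1 x) (hψsc x w.1 w.2) (abs_nonneg _) hC.le
    have hBg0 : 0 ≤ C * Bψc c C * ((ν.prod μ) Set.univ).toReal := by positivity
    -- the sstep derivative
    have HS : HasDerivAt (fun s : ℝ => ∫ r : Ω × 𝒴 × 𝒵,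
        ((if A r.1 = a then (1 : ℝ) else 0) / (π (X r.1) + s * (πh (X r.1) - π (X r.1)))
          * (ξ (r.2.1, X r.1) - (ξ (r.2.1, X r.1) + s * (ξh (r.2.1, X r.1) - ξ (r.2.1, X r.1))))
         + (ξ (r.2.1, X r.1) + s * (ξh (r.2.1, X r.1) - ξ (r.2.1, X r.1)))) *
        ((q (r.2.2, r.2.1, X r.1) - qstar (r.2.2, r.2.1, X r.1))
            * (Real.log (pstar (r.2.1, r.2.2, X r.1)) - Real.log (qstar (r.2.2, r.2.1, X r.1)))
          + qstar (r.2.2, r.2.1, X r.1)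
            * ((p (r.2.1, r.2.2, X r.1) - pstar (r.2.1, r.2.2, X r.1))
                / pstar (r.2.1, r.2.2, X r.1)
              - (q (r.2.2, r.2.1, X r.1) - qstar (r.2.2, r.2.1, X r.1))
                / qstar (r.2.2, r.2.1, X r.1))) ∂(P.prod (ν.prod μ)))
        (∫ r : Ω × 𝒴 × 𝒵,
          ((ξh (r.2.1, X r.1) - ξ (r.2.1, X r.1))
            * (1 - (if A r.1 = a then (1 : ℝ) else 0) / π (X r.1))) *
          ((q (r.2.2, r.2.1, X r.1) - qstar (r.2.2, r.2.1, X r.1))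
              * (Real.log (pstar (r.2.1, r.2.2, X r.1)) - Real.log (qstar (r.2.2, r.2.1, X r.1)))
            + qstar (r.2.2, r.2.1, X r.1)
              * ((p (r.2.1, r.2.2, X r.1) - pstar (r.2.1, r.2.2, X r.1))
                  / pstar (r.2.1, r.2.2, X r.1)
                - (q (r.2.2, r.2.1, X r.1) - qstar (r.2.2, r.2.1, X r.1))
                  / qstar (r.2.2, r.2.1, X r.1))) ∂(P.prod (ν.prod μ))) 0 := by
      refine sstep (P.prod (ν.prod μ)) hε hBψ0 hC.le hC.le _ _ _ _ _ _
        mK mPi mPh mXi mXih mΨ (fun r => hKor r.1) hovM (fun r => hπhmem (X r.1))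
        (fun r => ?_) (fun r => hξdbd r.2.1 (X r.1)) (fun r => hψsc (X r.1) r.2.1 r.2.2)
      exact abs_le.mpr ⟨by linarith [(hξmem (r.2.1, X r.1)).1, hc, hC],
        by linarith [(hξmem (r.2.1, X r.1)).2]⟩
    -- the derivative value vanishes
    have hintF0 : Integrable (fun r : Ω × 𝒴 × 𝒵 =>
        ((ξh (r.2.1, X r.1) - ξ (r.2.1, X r.1))
          * (1 - (if A r.1 = a then (1 : ℝ) else 0) / π (X r.1))) *
        ((q (r.2.2, r.2.1, X r.1) - qstar (r.2.2, r.2.1, X r.1))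
            * (Real.log (pstar (r.2.1, r.2.2, X r.1)) - Real.log (qstar (r.2.2, r.2.1, X r.1)))
          + qstar (r.2.2, r.2.1, X r.1)
            * ((p (r.2.1, r.2.2, X r.1) - pstar (r.2.1, r.2.2, X r.1))
                / pstar (r.2.1, r.2.2, X r.1)
              - (q (r.2.2, r.2.1, X r.1) - qstar (r.2.2, r.2.1, X r.1))
                / qstar (r.2.2, r.2.1, X r.1)))) (P.prod (ν.prod μ)) := by
      refine integrable_of_bdd (((mXih.sub mXi).mul
        (measurable_const.sub (mK.div mPi))).mul mΨ).aestronglyMeasurable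
        (B := C * (1 + 1 / ε) * Bψc c C) ?_
      filter_upwards [hovM] with r hr
      rw [abs_mul, abs_mul]
      have hπpos : 0 < π (X r.1) := lt_of_lt_of_le hε hr.1
      have hKπ : 0 ≤ (if A r.1 = a then (1 : ℝ) else 0) / π (X r.1) ∧
          (if A r.1 = a then (1 : ℝ) else 0) / π (X r.1) ≤ 1 / ε := by
        constructor
        · rcases hKor r.1 with h | h <;> rw [h]
          · simp
          · positivity
        · rcases hKor r.1 with h | h <;> rw [h]
          · simp; positivity
          · rw [div_le_div_iff₀ hπpos hε]; linarith [hr.1]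
      have h1 : |1 - (if A r.1 = a then (1 : ℝ) else 0) / π (X r.1)| ≤ 1 + 1 / ε :=
        abs_le.mpr ⟨by linarith [hKπ.1, hKπ.2], by linarith [hKπ.1, hKπ.2]⟩
      exact mul_le_mul (mul_le_mul (hξdbd r.2.1 (X r.1)) h1 (abs_nonneg _) hC.le)
        (hψsc (X r.1) r.2.1 r.2.2) (abs_nonneg _) (by positivity)
    have hint1 : Integrable (fun ω => g2 (X ω)) P :=
      integrable_of_bdd (mg2.comp hX).aestronglyMeasurable
        (Filter.Eventually.of_forall fun ω => hg2bd (X ω))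
    have hint2 : Integrable (fun ω =>
        (if A ω = a then (1 : ℝ) else 0) / π (X ω) * g2 (X ω)) P := by
      refine integrable_of_bdd ((hχm.div (hπmeas.comp hX)).mul
        (mg2.comp hX)).aestronglyMeasurable
        (B := 1 / ε * (C * Bψc c C * ((ν.prod μ) Set.univ).toReal)) ?_
      filter_upwards [hoverlap] with ω h
      rw [abs_mul]
      have hπpos : 0 < π (X ω) := lt_of_lt_of_le hε h.1
      have hK1 : |(if A ω = a then (1 : ℝ) else 0) / π (X ω)| ≤ 1 / ε := by
        rcases hKor ω with hk | hk <;> rw [hk]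
        · simp; positivity
        · rw [abs_div, abs_of_pos hπpos, abs_one, div_le_div_iff₀ hπpos hε]
          linarith [h.1]
      exact mul_le_mul hK1 (hg2bd (X ω)) (abs_nonneg _) (by positivity)
    -- the key identity coming from hξdens
    have hKey : ∫ ω, (if A ω = a then (1 : ℝ) else 0) / π (X ω) * g2 (X ω) ∂P
        = ∫ ω, g2 (X ω) ∂P := by
      set f : 𝒴 × 𝒳 → ℝ := fun yx => if ε ≤ π yx.2 then g2 yx.2 / π yx.2 else 0 with hfdef
      have hfmeas : Measurable f := by
        rw [hfdef]
        exact Measurable.ite (measurableSet_le measurable_const (hπmeas.comp measurable_snd))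
          ((mg2.comp measurable_snd).div (hπmeas.comp measurable_snd)) measurable_const
      have hfbd : ∀ yx : 𝒴 × 𝒳, |f yx| ≤ C * Bψc c C * ((ν.prod μ) Set.univ).toReal / ε := by
        intro yx
        rw [hfdef]
        dsimp only
        by_cases h : ε ≤ π yx.2
        · rw [if_pos h, abs_div]
          have hπpos : 0 < π yx.2 := lt_of_lt_of_le hε h
          rw [abs_of_pos hπpos]
          exact div_le_div₀ hBg0 (hg2bd _) hε h
        · rw [if_neg h]
          simpa using div_nonneg hBg0 hε.le
      have hEq := hξdens f hfmeas ⟨_, hfbd⟩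
      have hL : ∫ ω, (if A ω = a then (1 : ℝ) else 0) * f (Y ω, X ω) ∂P
          = ∫ ω, (if A ω = a then (1 : ℝ) else 0) / π (X ω) * g2 (X ω) ∂P := by
        refine integral_congr_ae (hoverlap.mono fun ω h => ?_)
        rw [hfdef]
        dsimp only
        rw [if_pos h.1]
        ring
      have hR : ∫ ω, π (X ω) * ∫ y, f (y, X ω) * ξ (y, X ω) ∂ν ∂P = ∫ ω, g2 (X ω) ∂P := by
        refine integral_congr_ae (hoverlap.mono fun ω h => ?_)
        show π (X ω) * (∫ y, f (y, X ω) * ξ (y, X ω) ∂ν) = g2 (X ω)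
        have hπpos : 0 < π (X ω) := lt_of_lt_of_le hε h.1
        have e1 : ∫ y, f (y, X ω) * ξ (y, X ω) ∂ν
            = g2 (X ω) / π (X ω) * ∫ y, ξ (y, X ω) ∂ν := by
          rw [hfdef]
          calc ∫ y, (if ε ≤ π (X ω) then g2 (X ω) / π (X ω) else 0) * ξ (y, X ω) ∂ν
              = ∫ y, g2 (X ω) / π (X ω) * ξ (y, X ω) ∂ν := by rw [if_pos h.1]
            _ = g2 (X ω) / π (X ω) * ∫ y, ξ (y, X ω) ∂ν := integral_const_mul _ _
        rw [e1, hξnorm, mul_one, mul_comm, div_mul_cancel₀ _ hπpos.ne']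
      rw [hL, hR] at hEq
      exact hEq
    have hzero : (∫ r : Ω × 𝒴 × 𝒵,
        ((ξh (r.2.1, X r.1) - ξ (r.2.1, X r.1))
          * (1 - (if A r.1 = a then (1 : ℝ) else 0) / π (X r.1))) *
        ((q (r.2.2, r.2.1, X r.1) - qstar (r.2.2, r.2.1, X r.1))
            * (Real.log (pstar (r.2.1, r.2.2, X r.1)) - Real.log (qstar (r.2.2, r.2.1, X r.1)))
          + qstar (r.2.2, r.2.1, X r.1)
            * ((p (r.2.1, r.2.2, X r.1) - pstar (r.2.1, r.2.2, X r.1))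
                / pstar (r.2.1, r.2.2, X r.1)
              - (q (r.2.2, r.2.1, X r.1) - qstar (r.2.2, r.2.1, X r.1))
                / qstar (r.2.2, r.2.1, X r.1))) ∂(P.prod (ν.prod μ))) = 0 := by
      rw [MeasureTheory.integral_prod _ hintF0]
      have hper : ∀ ω : Ω, (∫ w : 𝒴 × 𝒵,
          ((ξh (w.1, X ω) - ξ (w.1, X ω))
            * (1 - (if A ω = a then (1 : ℝ) else 0) / π (X ω))) *
          ((q (w.2, w.1, X ω) - qstar (w.2, w.1, X ω))
              * (Real.log (pstar (w.1, w.2, X ω)) - Real.log (qstar (w.2, w.1, X ω)))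
            + qstar (w.2, w.1, X ω)
              * ((p (w.1, w.2, X ω) - pstar (w.1, w.2, X ω)) / pstar (w.1, w.2, X ω)
                - (q (w.2, w.1, X ω) - qstar (w.2, w.1, X ω)) / qstar (w.2, w.1, X ω)))
          ∂(ν.prod μ))
          = (1 - (if A ω = a then (1 : ℝ) else 0) / π (X ω)) * g2 (X ω) := by
        intro ω
        calc (∫ w : 𝒴 × 𝒵,
            ((ξh (w.1, X ω) - ξ (w.1, X ω))
              * (1 - (if A ω = a then (1 : ℝ) else 0) / π (X ω))) *
            ((q (w.2, w.1, X ω) - qstar (w.2, w.1, X ω))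
                * (Real.log (pstar (w.1, w.2, X ω)) - Real.log (qstar (w.2, w.1, X ω)))
              + qstar (w.2, w.1, X ω)
                * ((p (w.1, w.2, X ω) - pstar (w.1, w.2, X ω)) / pstar (w.1, w.2, X ω)
                  - (q (w.2, w.1, X ω) - qstar (w.2, w.1, X ω)) / qstar (w.2, w.1, X ω)))
            ∂(ν.prod μ))
            = ∫ w : 𝒴 × 𝒵, (1 - (if A ω = a then (1 : ℝ) else 0) / π (X ω)) *
              ((ξh (w.1, X ω) - ξ (w.1, X ω)) *
              ((q (w.2, w.1, X ω) - qstar (w.2, w.1, X ω))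
                  * (Real.log (pstar (w.1, w.2, X ω)) - Real.log (qstar (w.2, w.1, X ω)))
                + qstar (w.2, w.1, X ω)
                  * ((p (w.1, w.2, X ω) - pstar (w.1, w.2, X ω)) / pstar (w.1, w.2, X ω)
                    - (q (w.2, w.1, X ω) - qstar (w.2, w.1, X ω)) / qstar (w.2, w.1, X ω))))
              ∂(ν.prod μ) :=
              integral_congr_ae (Filter.Eventually.of_forall fun w => by ring)
          _ = (1 - (if A ω = a then (1 : ℝ) else 0) / π (X ω)) * g2 (X ω) := by
              rw [hg2def]
              exact integral_const_mul _ _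
      calc ∫ ω, (∫ w : 𝒴 × 𝒵,
          ((ξh (w.1, X ω) - ξ (w.1, X ω))
            * (1 - (if A ω = a then (1 : ℝ) else 0) / π (X ω))) *
          ((q (w.2, w.1, X ω) - qstar (w.2, w.1, X ω))
              * (Real.log (pstar (w.1, w.2, X ω)) - Real.log (qstar (w.2, w.1, X ω)))
            + qstar (w.2, w.1, X ω)
              * ((p (w.1, w.2, X ω) - pstar (w.1, w.2, X ω)) / pstar (w.1, w.2, X ω)
                - (q (w.2, w.1, X ω) - qstar (w.2, w.1, X ω)) / qstar (w.2, w.1, X ω)))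
          ∂(ν.prod μ)) ∂P
          = ∫ ω, (g2 (X ω) - (if A ω = a then (1 : ℝ) else 0) / π (X ω) * g2 (X ω)) ∂P := by
            refine integral_congr_ae (Filter.Eventually.of_forall fun ω => ?_)
            show (∫ w : 𝒴 × 𝒵,
              ((ξh (w.1, X ω) - ξ (w.1, X ω))
                * (1 - (if A ω = a then (1 : ℝ) else 0) / π (X ω))) *
              ((q (w.2, w.1, X ω) - qstar (w.2, w.1, X ω))
                  * (Real.log (pstar (w.1, w.2, X ω)) - Real.log (qstar (w.2, w.1, X ω)))
                + qstar (w.2, w.1, X ω)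
                  * ((p (w.1, w.2, X ω) - pstar (w.1, w.2, X ω)) / pstar (w.1, w.2, X ω)
                    - (q (w.2, w.1, X ω) - qstar (w.2, w.1, X ω)) / qstar (w.2, w.1, X ω)))
              ∂(ν.prod μ))
              = g2 (X ω) - (if A ω = a then (1 : ℝ) else 0) / π (X ω) * g2 (X ω)
            rw [hper ω]; ring
        _ = (∫ ω, g2 (X ω) ∂P)
            - ∫ ω, (if A ω = a then (1 : ℝ) else 0) / π (X ω) * g2 (X ω) ∂P :=
            integral_sub hint1 hint2
        _ = 0 := by rw [hKey]; ring
    rw [hzero] at HS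
    exact HS
end

section
/- Partial Neyman-orthogonality of the IPTW-learner at the truth: if the target model equals the true conditional outcome density ξ, then for any direction ξ̂ the pathwise derivative of the inverse-propensity-weighted log-likelihood risk vanishes: (d/dt)|_{t=0} E[(𝟙{A = a}/π̂(X)) · log(ξ + t(ξ̂ − ξ))(Y | X)] = 0; equivalently, E[(𝟙{A = a}/π̂(X)) · (ξ̂ − ξ)(Y | X)/ξ(Y | X)] = 0. -/
open MeasureTheory ProbabilityTheory

/-- Partial Neyman-orthogonality of the IPTW-learner at the truth: if the target
model equals the true conditional outcome density ξ, then for any direction ξ̂ the pathwise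
derivative of the inverse-propensity-weighted log-likelihood risk vanishes:
`(d/dt)|₀ E[(𝟙{A = a}/π̂(X)) · log(ξ + t(ξ̂ − ξ))(Y | X)] = 0`; equivalently,
`E[(𝟙{A = a}/π̂(X)) · (ξ̂ − ξ)(Y | X)/ξ(Y | X)] = 0`. -/
theorem iptw_partial_neyman_orthogonality
    {Ω : Type*} [MeasurableSpace Ω]
    (P : Measure Ω) [IsProbabilityMeasure P]
    {𝒳 : Type*} [MeasurableSpace 𝒳] [StandardBorelSpace 𝒳]
    {𝒴 : Type*} [MeasurableSpace 𝒴] [StandardBorelSpace 𝒴]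
    (X : Ω → 𝒳) (hX : Measurable X)
    (A : Ω → Bool) (hA : Measurable A)
    (Y : Ω → 𝒴) (hY : Measurable Y)
    (a : Bool)
    -- propensity score: σ(X)-measurable version of E[𝟙{A = a} | σ(X)]
    (π : 𝒳 → ℝ) (hπmeas : Measurable π)
    (hπver : P[fun ω => (if A ω = a then (1 : ℝ) else 0) |
        MeasurableSpace.comap X inferInstance] =ᵐ[P] fun ω => π (X ω))
    -- strong overlap
    (ε : ℝ) (hε : 0 < ε)
    (hoverlap : ∀ᵐ ω ∂P, ε ≤ π (X ω) ∧ π (X ω) ≤ 1 - ε)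
    -- density setup
    (ν : Measure 𝒴) [IsFiniteMeasure ν]
    (c C : ℝ) (hc : 0 < c) (hcC : c ≤ C)
    (ξ : 𝒴 × 𝒳 → ℝ) (hξmeas : Measurable ξ)
    (hξmem : ∀ q, ξ q ∈ Set.Icc c C)
    (hξnorm : ∀ x, ∫ y, ξ (y, x) ∂ν = 1)
    -- ξ is the conditional outcome density
    (hξdens : ∀ f : 𝒴 × 𝒳 → ℝ, Measurable f → (∃ B : ℝ, ∀ q, |f q| ≤ B) →
      ∫ ω, (if A ω = a then (1 : ℝ) else 0) * f (Y ω, X ω) ∂P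
        = ∫ ω, π (X ω) * ∫ y, f (y, X ω) * ξ (y, X ω) ∂ν ∂P)
    -- nuisance estimates
    (πh : 𝒳 → ℝ) (hπhmeas : Measurable πh) (hπhmem : ∀ x, πh x ∈ Set.Icc ε 1)
    (ξh : 𝒴 × 𝒳 → ℝ) (hξhmeas : Measurable ξh)
    (hξhmem : ∀ q, ξh q ∈ Set.Icc c C)
    (hξhnorm : ∀ x, ∫ y, ξh (y, x) ∂ν = 1) :
    HasDerivAt (fun t : ℝ => ∫ ω,
        ((if A ω = a then (1 : ℝ) else 0) / πh (X ω))
          * Real.log (ξ (Y ω, X ω) + t * (ξh (Y ω, X ω) - ξ (Y ω, X ω))) ∂P) 0 0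
    ∧
    ∫ ω, ((if A ω = a then (1 : ℝ) else 0) / πh (X ω))
        * ((ξh (Y ω, X ω) - ξ (Y ω, X ω)) / ξ (Y ω, X ω)) ∂P = 0 := by
  classical
  have hπh_pos : ∀ x, 0 < πh x := fun x => lt_of_lt_of_le hε (hπhmem x).1
  have hξpos : ∀ q, 0 < ξ q := fun q => lt_of_lt_of_le hc (hξmem q).1
  have hξne : ∀ q, ξ q ≠ 0 := fun q => (hξpos q).ne'
  have hind_meas : Measurable (fun ω => (if A ω = a then (1 : ℝ) else 0)) :=
    Measurable.ite (hA (measurableSet_singleton a)) measurable_const measurable_const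
  have hYX : Measurable (fun ω => (Y ω, X ω)) := hY.prodMk hX
  -- generic integrability over ν of Icc-bounded functions
  have hint : ∀ (g : 𝒴 × 𝒳 → ℝ), Measurable g → (∀ q, g q ∈ Set.Icc c C) →
      ∀ x, Integrable (fun y => g (y, x)) ν := by
    intro g hg hmem x
    refine Integrable.mono' (integrable_const C)
      ((hg.comp (measurable_id.prodMk measurable_const)).aestronglyMeasurable) ?_
    filter_upwards with y
    rw [Real.norm_eq_abs, abs_le]
    exact ⟨by linarith [(hmem (y, x)).1], (hmem (y, x)).2⟩
  -- PART 2
  set f : 𝒴 × 𝒳 → ℝ := fun q => (ξh q - ξ q) / (ξ q * πh q.2) with hfdef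
  have hf_meas : Measurable f := (hξhmeas.sub hξmeas).div (hξmeas.mul (hπhmeas.comp measurable_snd))
  have hf_bdd : ∃ B : ℝ, ∀ q, |f q| ≤ B := by
    refine ⟨(C - c) / (c * ε), fun q => ?_⟩
    rw [hfdef, abs_div]
    apply div_le_div₀ (by linarith)
    · rw [abs_le]
      constructor
      · have := (hξhmem q).1; have := (hξmem q).2; linarith
      · have := (hξhmem q).2; have := (hξmem q).1; linarith
    · exact mul_pos hc hε
    · rw [abs_of_pos (mul_pos (hξpos q) (hπh_pos q.2))]
      have h1 := (hξmem q).1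
      have h2 := (hπhmem q.2).1
      nlinarith [hξpos q, hπh_pos q.2]
  have key : ∫ ω, ((if A ω = a then (1 : ℝ) else 0) / πh (X ω))
      * ((ξh (Y ω, X ω) - ξ (Y ω, X ω)) / ξ (Y ω, X ω)) ∂P = 0 := by
    have hpt : ∀ ω, ((if A ω = a then (1 : ℝ) else 0) / πh (X ω))
        * ((ξh (Y ω, X ω) - ξ (Y ω, X ω)) / ξ (Y ω, X ω))
        = (if A ω = a then (1 : ℝ) else 0) * f (Y ω, X ω) := by
      intro ω
      rw [hfdef]
      have h1 := (hπh_pos (X ω)).ne'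
      have h2 := hξne (Y ω, X ω)
      field_simp
    rw [show (fun ω => ((if A ω = a then (1 : ℝ) else 0) / πh (X ω))
        * ((ξh (Y ω, X ω) - ξ (Y ω, X ω)) / ξ (Y ω, X ω)))
        = fun ω => (if A ω = a then (1 : ℝ) else 0) * f (Y ω, X ω) from funext hpt]
    rw [hξdens f hf_meas hf_bdd]
    have hinner : ∀ x : 𝒳, (∫ y, f (y, x) * ξ (y, x) ∂ν) = 0 := by
      intro x
      have hpt2 : ∀ y, f (y, x) * ξ (y, x) = (ξh (y, x) - ξ (y, x)) / πh x := by
        intro y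
        rw [hfdef]
        have h1 := (hπh_pos x).ne'
        have h2 := hξne (y, x)
        field_simp
      rw [show (fun y => f (y, x) * ξ (y, x)) = fun y => (ξh (y, x) - ξ (y, x)) / πh x
        from funext hpt2]
      rw [integral_div, integral_sub (hint ξh hξhmeas hξhmem x) (hint ξ hξmeas hξmem x),
        hξhnorm x, hξnorm x]
      simp
    simp only [hinner, mul_zero, integral_zero]
  refine ⟨?_, key⟩
  -- PART 1
  set w : Ω → ℝ := fun ω => (if A ω = a then (1 : ℝ) else 0) / πh (X ω) with hwdef
  have hw_meas : Measurable w := hind_meas.div (hπhmeas.comp hX)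
  have hw_bd : ∀ ω, |w ω| ≤ 1 / ε := by
    intro ω
    rw [hwdef, abs_div]
    apply div_le_div₀ zero_le_one
    · split <;> simp
    · exact hε
    · rw [abs_of_pos (hπh_pos (X ω))]; exact (hπhmem (X ω)).1
  set Δ : Ω → ℝ := fun ω => ξh (Y ω, X ω) - ξ (Y ω, X ω) with hΔdef
  have hΔ_bd : ∀ ω, |Δ ω| ≤ C - c := by
    intro ω
    show |ξh (Y ω, X ω) - ξ (Y ω, X ω)| ≤ C - c
    rw [abs_le]
    constructor
    · have := (hξhmem (Y ω, X ω)).1; have := (hξmem (Y ω, X ω)).2; linarith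
    · have := (hξhmem (Y ω, X ω)).2; have := (hξmem (Y ω, X ω)).1; linarith
  set δ : ℝ := c / (2 * (C - c) + 2) with hδdef
  have hδpos : 0 < δ := by rw [hδdef]; exact div_pos hc (by linarith)
  have hden : ∀ ω, ∀ t ∈ Metric.ball (0 : ℝ) δ, c / 2 ≤ ξ (Y ω, X ω) + t * Δ ω := by
    intro ω t ht
    rw [Metric.mem_ball, Real.dist_eq, sub_zero] at ht
    have h1 : |t * Δ ω| ≤ c / 2 := by
      rw [abs_mul]
      calc |t| * |Δ ω| ≤ δ * (C - c) := by
            apply mul_le_mul ht.le (hΔ_bd ω) (abs_nonneg _) hδpos.le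
        _ ≤ c / 2 := by
            rw [hδdef, div_mul_eq_mul_div, div_le_div_iff₀ (by linarith) (by norm_num)]
            nlinarith
    have h2 := (hξmem (Y ω, X ω)).1
    have := abs_le.mp h1
    linarith [this.1]
  have hdiff : ∀ ω, ∀ t ∈ Metric.ball (0 : ℝ) δ,
      HasDerivAt (fun s : ℝ => w ω * Real.log (ξ (Y ω, X ω) + s * Δ ω))
        (w ω * (Δ ω / (ξ (Y ω, X ω) + t * Δ ω))) t := by
    intro ω t ht
    have hne : ξ (Y ω, X ω) + t * Δ ω ≠ 0 :=
      ne_of_gt (lt_of_lt_of_le (by linarith) (hden ω t ht))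
    have h1 : HasDerivAt (fun s : ℝ => ξ (Y ω, X ω) + s * Δ ω) (Δ ω) t := by
      simpa using ((hasDerivAt_id t).mul_const (Δ ω)).const_add (ξ (Y ω, X ω))
    exact (h1.log hne).const_mul (w ω)
  set K : ℝ := (1 / ε) * ((C - c) / (c / 2)) with hKdef
  have hbound : ∀ ω, ∀ t ∈ Metric.ball (0 : ℝ) δ,
      ‖w ω * (Δ ω / (ξ (Y ω, X ω) + t * Δ ω))‖ ≤ K := by
    intro ω t ht
    rw [Real.norm_eq_abs, abs_mul, hKdef]
    apply mul_le_mul (hw_bd ω) ?_ (abs_nonneg _) (by positivity)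
    rw [abs_div]
    apply div_le_div₀ (by linarith) (hΔ_bd ω) (by linarith)
    rw [abs_of_pos (lt_of_lt_of_le (by linarith) (hden ω t ht))]
    exact hden ω t ht
  have hF_meas : ∀ t : ℝ, AEStronglyMeasurable
      (fun ω => w ω * Real.log (ξ (Y ω, X ω) + t * Δ ω)) P := by
    intro t
    exact (hw_meas.mul (Real.measurable_log.comp
      (((hξmeas.comp hYX).add (((hξhmeas.comp hYX).sub
        (hξmeas.comp hYX)).const_mul t))))).aestronglyMeasurable
  have hF'_meas : AEStronglyMeasurable
      (fun ω => w ω * (Δ ω / (ξ (Y ω, X ω) + (0:ℝ) * Δ ω))) P := by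
    exact (hw_meas.mul (((hξhmeas.comp hYX).sub (hξmeas.comp hYX)).div
      ((hξmeas.comp hYX).add (((hξhmeas.comp hYX).sub
        (hξmeas.comp hYX)).const_mul (0:ℝ))))).aestronglyMeasurable
  have hF0_int : Integrable (fun ω => w ω * Real.log (ξ (Y ω, X ω) + (0:ℝ) * Δ ω)) P := by
    refine Integrable.mono' (integrable_const ((1/ε) * (|Real.log c| + |Real.log C|)))
      (hF_meas 0) ?_
    filter_upwards with ω
    rw [Real.norm_eq_abs, abs_mul]
    apply mul_le_mul (hw_bd ω) ?_ (abs_nonneg _) (by positivity)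
    have h1 : ξ (Y ω, X ω) + (0:ℝ) * Δ ω = ξ (Y ω, X ω) := by ring
    rw [h1]
    have h2 := (hξmem (Y ω, X ω)).1
    have h3 := (hξmem (Y ω, X ω)).2
    have hl1 : Real.log c ≤ Real.log (ξ (Y ω, X ω)) := Real.log_le_log hc h2
    have hl2 : Real.log (ξ (Y ω, X ω)) ≤ Real.log C := Real.log_le_log (hξpos _) h3
    rw [abs_le]
    constructor
    · have := neg_abs_le (Real.log c); have := abs_nonneg (Real.log C); linarith
    · have := le_abs_self (Real.log C); have := abs_nonneg (Real.log c); linarith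
  have hmain := hasDerivAt_integral_of_dominated_loc_of_deriv_le (Metric.ball_mem_nhds 0 hδpos)
    (Filter.Eventually.of_forall hF_meas) hF0_int hF'_meas
    (Filter.Eventually.of_forall hbound) (integrable_const K)
    (Filter.Eventually.of_forall hdiff)
  have hzero : ∫ ω, w ω * (Δ ω / (ξ (Y ω, X ω) + (0:ℝ) * Δ ω)) ∂P = 0 := by
    have heq : (fun ω => w ω * (Δ ω / (ξ (Y ω, X ω) + (0:ℝ) * Δ ω)))
        = fun ω => ((if A ω = a then (1 : ℝ) else 0) / πh (X ω))
          * ((ξh (Y ω, X ω) - ξ (Y ω, X ω)) / ξ (Y ω, X ω)) := by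
      funext ω
      show w ω * (Δ ω / (ξ (Y ω, X ω) + 0 * Δ ω)) = _
      rw [zero_mul, add_zero]
    rw [heq]
    exact key
  rw [hzero] at hmain
  exact hmain.2
end
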